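/- arXiv:1908.11360 — 2 statements merged into one kernel-verified Lean document; each statement's English description precedes it below -/
import Mathlib

section
/- Decidability of single-agent STIT logics: for each n ∈ ℕ, the set of formulas φ ∈ L^1 that are valid on all Ldm_n^1-models is decidable, i.e., there is a computable function that, given a formula φ ∈ L^1, decides whether ⊩ φ. -/
namespace Stit

/-- Formulas of the language `L^m` (negation normal form), with agents `Fin m`
and propositional variables indexed by `ℕ`. -/
inductive Fml (m : ℕ) : Type
  | pos : ℕ → Fml m                  -- p
  | neg : ℕ → Fml m                  -- p̄
  | and : Fml m → Fml m → Fml m      -- φ ∧ ψ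
  | or  : Fml m → Fml m → Fml m      -- φ ∨ ψ
  | box : Fml m → Fml m              -- □φ
  | dia : Fml m → Fml m              -- ◇φ
  | ag  : Fin m → Fml m → Fml m      -- [i]φ
  | dag : Fin m → Fml m → Fml m      -- ⟨i⟩φ

namespace Fml

/-- Negation `φ̄`: replace every connective/modality by its dual and swap `p` with `p̄`. -/
def negF {m : ℕ} : Fml m → Fml m
  | pos p => neg p
  | neg p => pos p
  | and φ ψ => or φ.negF ψ.negF
  | or φ ψ => and φ.negF ψ.negF
  | box φ => dia φ.negF
  | dia φ => box φ.negF
  | ag i φ => dag i φ.negF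
  | dag i φ => ag i φ.negF

/-- `φ → ψ` abbreviates `φ̄ ∨ ψ`. -/
def impF {m : ℕ} (φ ψ : Fml m) : Fml m := or φ.negF ψ

end Fml

/-- `f 0 ∧ f 1 ∧ ⋯ ∧ f k` (left-associated). -/
def conjUpTo {m : ℕ} (f : ℕ → Fml m) : ℕ → Fml m
  | 0 => f 0
  | k+1 => Fml.and (conjUpTo f k) (f (k+1))

/-- `f 0 ∨ f 1 ∨ ⋯ ∨ f k` (left-associated). -/
def disjUpTo {m : ℕ} (f : ℕ → Fml m) : ℕ → Fml m
  | 0 => f 0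
  | k+1 => Fml.or (disjUpTo f k) (f (k+1))

/-- `(f 0)̄ ∧ ((f 1)̄ ∧ ⋯ ((f (j-1))̄ ∧ base))`. -/
def prefNegConj {m : ℕ} (f : ℕ → Fml m) : ℕ → Fml m → Fml m
  | 0, base => base
  | j+1, base => prefNegConj f j (Fml.and (f j).negF base)

/-- The antecedent `◇[i]φ_0 ∧ ◇(φ̄_0 ∧ [i]φ_1) ∧ ⋯ ∧ ◇(φ̄_0 ∧ ⋯ ∧ φ̄_{n'-1} ∧ [i]φ_{n'})`
of the (n'+1)-choice axiom. -/
def apcAnte {m : ℕ} (i : Fin m) (f : ℕ → Fml m) (n' : ℕ) : Fml m :=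
  conjUpTo (fun j => Fml.dia (prefNegConj f j (Fml.ag i (f j)))) n'

/-- The n-choice axiom `APC_n^i` for `n = n' + 1` choices `φ_0, …, φ_{n'}`. -/
def apcAx {m : ℕ} (i : Fin m) (f : ℕ → Fml m) (n' : ℕ) : Fml m :=
  (apcAnte i f n').impF (disjUpTo f n')

def diaAgIdx {m : ℕ} (f : Fin m → Fml m) (j : ℕ) : Fml m :=
  if h : j < m then Fml.dia (Fml.ag ⟨j, h⟩ (f ⟨j, h⟩)) else Fml.pos 0

def agIdx {m : ℕ} (f : Fin m → Fml m) (j : ℕ) : Fml m :=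
  if h : j < m then Fml.ag ⟨j, h⟩ (f ⟨j, h⟩) else Fml.pos 0

/-- The independence-of-agents axiom `⋀_{i∈Ag} ◇[i]φ_i → ◇(⋀_{i∈Ag} [i]φ_i)`
(for `m ≥ 1` agents). -/
def ioaAx {m : ℕ} (f : Fin m → Fml m) : Fml m :=
  (conjUpTo (diaAgIdx f) (m-1)).impF (Fml.dia (conjUpTo (agIdx f) (m-1)))

/-- An `Ldm_n^m`-model on the carrier `W`: each `rel i` is an equivalence relation (C1),
independence of agents (C2), the `n`-choice condition when `n > 0` (C3), plus a valuation. -/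
structure ModelOn (n m : ℕ) (W : Type) : Type where
  nonemp : Nonempty W
  rel : Fin m → W → W → Prop
  refl : ∀ i w, rel i w w
  symm : ∀ i w u, rel i w u → rel i u w
  trans : ∀ i w u v, rel i w u → rel i u v → rel i w v
  ioa : ∀ u : Fin m → W, ∃ v, ∀ i, rel i (u i) v
  apc : 0 < n → ∀ (i : Fin m) (w : Fin (n+1) → W),
      ∃ k j : Fin (n+1), k < j ∧ rel i (w k) (w j)
  val : ℕ → Set W

/-- Satisfaction `M, w ⊩ φ`. -/
def Sat {n m : ℕ} {W : Type} (M : ModelOn n m W) : W → Fml m → Prop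
  | w, .pos p => w ∈ M.val p
  | w, .neg p => w ∉ M.val p
  | w, .and φ ψ => Sat M w φ ∧ Sat M w ψ
  | w, .or φ ψ => Sat M w φ ∨ Sat M w ψ
  | _, .box φ => ∀ u, Sat M u φ
  | _, .dia φ => ∃ u, Sat M u φ
  | w, .ag i φ => ∀ u, M.rel i w u → Sat M u φ
  | w, .dag i φ => ∃ u, M.rel i w u ∧ Sat M u φ

/-- Validity: `⊩ φ`. -/
def Valid (n m : ℕ) (φ : Fml m) : Prop :=
  ∀ (W : Type) (M : ModelOn n m W) (w : W), Sat M w φ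

/-- Semantic consequence `Γ ⊩ φ`. -/
def SemConseq (n m : ℕ) (Γ : Set (Fml m)) (φ : Fml m) : Prop :=
  ∀ (W : Type) (M : ModelOn n m W) (w : W), (∀ ψ ∈ Γ, Sat M w ψ) → Sat M w φ

/-- The Hilbert calculus `Ldm_n^m`: classical propositional logic, S5 for `□` and each
`[i]`, the bridge axiom, IOA, the n-choice axioms (for `n > 0`), with modus ponens and
necessitation (applied to theorems). `Hderiv n m Γ φ` is `Γ ⊢_{Ldm_n^m} φ`. -/
inductive Hderiv (n m : ℕ) : Set (Fml m) → Fml m → Prop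
  | prem {Γ} {φ} (h : φ ∈ Γ) : Hderiv n m Γ φ
  | ax1 {Γ} (φ ψ : Fml m) : Hderiv n m Γ (φ.impF (ψ.impF φ))
  | ax2 {Γ} (φ ψ χ : Fml m) :
      Hderiv n m Γ ((φ.impF (ψ.impF χ)).impF ((φ.impF ψ).impF (φ.impF χ)))
  | ax3 {Γ} (φ ψ : Fml m) :
      Hderiv n m Γ ((ψ.negF.impF φ.negF).impF (φ.impF ψ))
  | boxK {Γ} (φ ψ : Fml m) :
      Hderiv n m Γ ((Fml.box (φ.impF ψ)).impF ((Fml.box φ).impF (Fml.box ψ)))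
  | boxT {Γ} (φ : Fml m) : Hderiv n m Γ ((Fml.box φ).impF φ)
  | box5 {Γ} (φ : Fml m) : Hderiv n m Γ ((Fml.dia φ).impF (Fml.box (Fml.dia φ)))
  | boxDual {Γ} (φ : Fml m) : Hderiv n m Γ (Fml.or (Fml.box φ) (Fml.dia φ.negF))
  | agK {Γ} (i : Fin m) (φ ψ : Fml m) :
      Hderiv n m Γ ((Fml.ag i (φ.impF ψ)).impF ((Fml.ag i φ).impF (Fml.ag i ψ)))
  | agT {Γ} (i : Fin m) (φ : Fml m) : Hderiv n m Γ ((Fml.ag i φ).impF φ)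
  | ag5 {Γ} (i : Fin m) (φ : Fml m) :
      Hderiv n m Γ ((Fml.dag i φ).impF (Fml.ag i (Fml.dag i φ)))
  | agDual {Γ} (i : Fin m) (φ : Fml m) :
      Hderiv n m Γ (Fml.or (Fml.ag i φ) (Fml.dag i φ.negF))
  | bridge {Γ} (i : Fin m) (φ : Fml m) :
      Hderiv n m Γ ((Fml.box φ).impF (Fml.ag i φ))
  | ioa {Γ} (f : Fin m → Fml m) : Hderiv n m Γ (ioaAx f)
  | apc {Γ} (hn : 0 < n) (i : Fin m) (f : ℕ → Fml m) :
      Hderiv n m Γ (apcAx i f (n-1))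
  | mp {Γ} {φ ψ} : Hderiv n m Γ (φ.impF ψ) → Hderiv n m Γ φ → Hderiv n m Γ ψ
  | nec {Γ} {φ} : Hderiv n m ∅ φ → Hderiv n m Γ (Fml.box φ)

/-- A relational atom `R_i x y`. -/
abbrev RAtom (m : ℕ) : Type := Fin m × ℕ × ℕ
/-- The relational part of a labelled sequent: a multiset of relational atoms. -/
abbrev RAtoms (m : ℕ) : Type := Multiset (RAtom m)
/-- A labelled formula `x : φ`. -/
abbrev LFml (m : ℕ) : Type := ℕ × Fml m
/-- The formula part of a labelled sequent: a multiset of labelled formulas. -/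
abbrev LFmls (m : ℕ) : Type := Multiset (LFml m)

/-- The label `v` does not occur in the labelled sequent `R, Γ` (eigenvariable condition). -/
def freshIn {m : ℕ} (v : ℕ) (R : RAtoms m) (Γ : LFmls m) : Prop :=
  (∀ a ∈ R, a.2.1 ≠ v ∧ a.2.2 ≠ v) ∧ ∀ e ∈ Γ, e.1 ≠ v

/-- `Reach R i w u`: `u` is `i`-reachable from `w`, i.e. there is a (possibly empty)
path of `R_i`-atoms of `R` (traversed in either direction) connecting `w` to `u`. -/
inductive Reach {m : ℕ} (R : RAtoms m) (i : Fin m) : ℕ → ℕ → Prop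
  | refl (w : ℕ) : Reach R i w w
  | fwd {w u v : ℕ} : Reach R i w u → ((i, u, v) : RAtom m) ∈ R → Reach R i w v
  | bwd {w u v : ℕ} : Reach R i w u → ((i, v, u) : RAtom m) ∈ R → Reach R i w v

/-- The relational atoms `R_1 u_1 v, …, R_m u_m v` used by the rule (IOA). -/
def ioaAtoms {m : ℕ} (u : Fin m → ℕ) (v : ℕ) : RAtoms m :=
  Multiset.ofList ((List.finRange m).map fun i => ((i, u i, v) : RAtom m))

/-- Which optional rules are present in a labelled calculus, and whether the
`[i]`-rule keeps its principal formula in the premise. -/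
structure Flags : Type where
  refl : Bool    -- (refl_i)
  eucl : Bool    -- (eucl_i)
  diaAg : Bool   -- (⟨i⟩)
  pr : Bool      -- (Pr_i)
  ioa : Bool     -- (IOA)
  agKeep : Bool  -- premise of ([i]) keeps w:[i]φ

/-- `SeqH fl n m h R Γ`: the labelled sequent `R, Γ` has a derivation of height at most
`h` in the labelled calculus determined by `fl` (with parameters `n`, `m`). -/
inductive SeqH (fl : Flags) (n m : ℕ) : ℕ → RAtoms m → LFmls m → Prop
  | id {h : ℕ} {R : RAtoms m} {Γ : LFmls m} (w p : ℕ) :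
      SeqH fl n m h R ((w, Fml.pos p) ::ₘ (w, Fml.neg p) ::ₘ Γ)
  | andR {h R Γ} {w : ℕ} {φ ψ : Fml m} :
      SeqH fl n m h R ((w, Fml.and φ ψ) ::ₘ (w, φ) ::ₘ Γ) →
      SeqH fl n m h R ((w, Fml.and φ ψ) ::ₘ (w, ψ) ::ₘ Γ) →
      SeqH fl n m (h+1) R ((w, Fml.and φ ψ) ::ₘ Γ)
  | orR {h R Γ} {w : ℕ} {φ ψ : Fml m} :
      SeqH fl n m h R ((w, Fml.or φ ψ) ::ₘ (w, φ) ::ₘ (w, ψ) ::ₘ Γ) →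
      SeqH fl n m (h+1) R ((w, Fml.or φ ψ) ::ₘ Γ)
  | boxR {h R Γ} {w v : ℕ} {φ : Fml m}
      (hv : freshIn v R ((w, Fml.box φ) ::ₘ Γ)) :
      SeqH fl n m h R ((w, Fml.box φ) ::ₘ (v, φ) ::ₘ Γ) →
      SeqH fl n m (h+1) R ((w, Fml.box φ) ::ₘ Γ)
  | diaR {h R Γ} {w u : ℕ} {φ : Fml m} :
      SeqH fl n m h R ((w, Fml.dia φ) ::ₘ (u, φ) ::ₘ Γ) →
      SeqH fl n m (h+1) R ((w, Fml.dia φ) ::ₘ Γ)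
  | agR {h R Γ} {w v : ℕ} {i : Fin m} {φ : Fml m} (hfl : fl.agKeep = false)
      (hv : freshIn v R ((w, Fml.ag i φ) ::ₘ Γ)) :
      SeqH fl n m h (((i, w, v) : RAtom m) ::ₘ R) ((v, φ) ::ₘ Γ) →
      SeqH fl n m (h+1) R ((w, Fml.ag i φ) ::ₘ Γ)
  | agRKeep {h R Γ} {w v : ℕ} {i : Fin m} {φ : Fml m} (hfl : fl.agKeep = true)
      (hv : freshIn v R ((w, Fml.ag i φ) ::ₘ Γ)) :
      SeqH fl n m h (((i, w, v) : RAtom m) ::ₘ R) ((w, Fml.ag i φ) ::ₘ (v, φ) ::ₘ Γ) →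
      SeqH fl n m (h+1) R ((w, Fml.ag i φ) ::ₘ Γ)
  | dagR {h R Γ} {w u : ℕ} {i : Fin m} {φ : Fml m} (hfl : fl.diaAg = true) :
      SeqH fl n m h (((i, w, u) : RAtom m) ::ₘ R) ((w, Fml.dag i φ) ::ₘ (u, φ) ::ₘ Γ) →
      SeqH fl n m (h+1) (((i, w, u) : RAtom m) ::ₘ R) ((w, Fml.dag i φ) ::ₘ Γ)
  | reflR {h R Γ} {i : Fin m} {w : ℕ} (hfl : fl.refl = true) :
      SeqH fl n m h (((i, w, w) : RAtom m) ::ₘ R) Γ →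
      SeqH fl n m (h+1) R Γ
  | euclR {h R Γ} {i : Fin m} {w u v : ℕ} (hfl : fl.eucl = true) :
      SeqH fl n m h (((i, w, u) : RAtom m) ::ₘ ((i, w, v) : RAtom m) ::ₘ
        ((i, u, v) : RAtom m) ::ₘ R) Γ →
      SeqH fl n m (h+1) (((i, w, u) : RAtom m) ::ₘ ((i, w, v) : RAtom m) ::ₘ R) Γ
  | ioaR {h R Γ} (hfl : fl.ioa = true) (u : Fin m → ℕ) (v : ℕ) (hv : freshIn v R Γ) :
      SeqH fl n m h (ioaAtoms u v + R) Γ →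
      SeqH fl n m (h+1) R Γ
  | apcR {h R Γ} (hn : 0 < n) (i : Fin m) (w : Fin (n+1) → ℕ) :
      (∀ k j : Fin (n+1), k < j → SeqH fl n m h (((i, w k, w j) : RAtom m) ::ₘ R) Γ) →
      SeqH fl n m (h+1) R Γ
  | prR {h R Γ} {w u : ℕ} {i : Fin m} {φ : Fml m} (hfl : fl.pr = true)
      (hreach : Reach R i w u) :
      SeqH fl n m h R ((w, Fml.dag i φ) ::ₘ (u, φ) ::ₘ Γ) →
      SeqH fl n m (h+1) R ((w, Fml.dag i φ) ::ₘ Γ)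

/-- Derivability (of some height) in the labelled calculus determined by `fl`. -/
def Seq (fl : Flags) (n m : ℕ) (R : RAtoms m) (Γ : LFmls m) : Prop :=
  ∃ h, SeqH fl n m h R Γ

/-- The calculus `G3Ldm_n^m`. -/
def G3flags : Flags := ⟨true, true, true, false, true, false⟩
/-- The calculus `G3Ldm_n^m + PR`. -/
def G3PRflags : Flags := ⟨true, true, true, true, true, false⟩
/-- `G3Ldm_n^m + PR` without the rules `(refl_i)`. -/
def G3PRnoReflFlags : Flags := ⟨false, true, true, true, true, false⟩
/-- `G3Ldm_n^m + PR` without the rules `(eucl_i)`. -/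
def G3PRnoEuclFlags : Flags := ⟨true, false, true, true, true, false⟩
/-- The refined calculus `Ldm_n^m L`. -/
def LdmLflags : Flags := ⟨false, false, false, true, true, true⟩
/-- The refined single-agent calculus `Ldm_n^1 L` (no (IOA)). -/
def LdmL1flags : Flags := ⟨false, false, false, true, false, true⟩

/-- Substitution of the label `y` for the label `x`. -/
def substLab (x y v : ℕ) : ℕ := if v = x then y else v

def substR {m : ℕ} (x y : ℕ) (R : RAtoms m) : RAtoms m :=
  R.map fun a => (a.1, substLab x y a.2.1, substLab x y a.2.2)

def substF {m : ℕ} (x y : ℕ) (Γ : LFmls m) : LFmls m :=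
  Γ.map fun e => (substLab x y e.1, e.2)

/-- Height-preserving invertibility of every inference rule of the calculus given by `fl`. -/
def InvertAll (fl : Flags) (n m : ℕ) : Prop :=
  (∀ h R Γ (w : ℕ) (φ ψ : Fml m), SeqH fl n m h R ((w, Fml.and φ ψ) ::ₘ Γ) →
     SeqH fl n m h R ((w, Fml.and φ ψ) ::ₘ (w, φ) ::ₘ Γ) ∧
     SeqH fl n m h R ((w, Fml.and φ ψ) ::ₘ (w, ψ) ::ₘ Γ)) ∧
  (∀ h R Γ (w : ℕ) (φ ψ : Fml m), SeqH fl n m h R ((w, Fml.or φ ψ) ::ₘ Γ) →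
     SeqH fl n m h R ((w, Fml.or φ ψ) ::ₘ (w, φ) ::ₘ (w, ψ) ::ₘ Γ)) ∧
  (∀ h R Γ (w v : ℕ) (φ : Fml m), freshIn v R ((w, Fml.box φ) ::ₘ Γ) →
     SeqH fl n m h R ((w, Fml.box φ) ::ₘ Γ) →
     SeqH fl n m h R ((w, Fml.box φ) ::ₘ (v, φ) ::ₘ Γ)) ∧
  (∀ h R Γ (w u : ℕ) (φ : Fml m), SeqH fl n m h R ((w, Fml.dia φ) ::ₘ Γ) →
     SeqH fl n m h R ((w, Fml.dia φ) ::ₘ (u, φ) ::ₘ Γ)) ∧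
  (fl.agKeep = false → ∀ h R Γ (w v : ℕ) (i : Fin m) (φ : Fml m),
     freshIn v R ((w, Fml.ag i φ) ::ₘ Γ) →
     SeqH fl n m h R ((w, Fml.ag i φ) ::ₘ Γ) →
     SeqH fl n m h (((i, w, v) : RAtom m) ::ₘ R) ((v, φ) ::ₘ Γ)) ∧
  (fl.agKeep = true → ∀ h R Γ (w v : ℕ) (i : Fin m) (φ : Fml m),
     freshIn v R ((w, Fml.ag i φ) ::ₘ Γ) →
     SeqH fl n m h R ((w, Fml.ag i φ) ::ₘ Γ) →
     SeqH fl n m h (((i, w, v) : RAtom m) ::ₘ R) ((w, Fml.ag i φ) ::ₘ (v, φ) ::ₘ Γ)) ∧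
  (fl.diaAg = true → ∀ h R Γ (w u : ℕ) (i : Fin m) (φ : Fml m),
     SeqH fl n m h (((i, w, u) : RAtom m) ::ₘ R) ((w, Fml.dag i φ) ::ₘ Γ) →
     SeqH fl n m h (((i, w, u) : RAtom m) ::ₘ R) ((w, Fml.dag i φ) ::ₘ (u, φ) ::ₘ Γ)) ∧
  (fl.refl = true → ∀ h R Γ (i : Fin m) (w : ℕ), SeqH fl n m h R Γ →
     SeqH fl n m h (((i, w, w) : RAtom m) ::ₘ R) Γ) ∧
  (fl.eucl = true → ∀ h R Γ (i : Fin m) (w u v : ℕ),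
     SeqH fl n m h (((i, w, u) : RAtom m) ::ₘ ((i, w, v) : RAtom m) ::ₘ R) Γ →
     SeqH fl n m h (((i, w, u) : RAtom m) ::ₘ ((i, w, v) : RAtom m) ::ₘ
       ((i, u, v) : RAtom m) ::ₘ R) Γ) ∧
  (fl.ioa = true → ∀ h R Γ (u : Fin m → ℕ) (v : ℕ), freshIn v R Γ →
     SeqH fl n m h R Γ → SeqH fl n m h (ioaAtoms u v + R) Γ) ∧
  (0 < n → ∀ h R Γ (i : Fin m) (w : Fin (n+1) → ℕ) (k j : Fin (n+1)), k < j →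
     SeqH fl n m h R Γ → SeqH fl n m h (((i, w k, w j) : RAtom m) ::ₘ R) Γ) ∧
  (fl.pr = true → ∀ h R Γ (w u : ℕ) (i : Fin m) (φ : Fml m), Reach R i w u →
     SeqH fl n m h R ((w, Fml.dag i φ) ::ₘ Γ) →
     SeqH fl n m h R ((w, Fml.dag i φ) ::ₘ (u, φ) ::ₘ Γ))

/-- A labelled sequent `R, Γ` is satisfied in `M` under the interpretation `I`. -/
def SeqSat {n m : ℕ} {W : Type} (M : ModelOn n m W) (I : ℕ → W)
    (R : RAtoms m) (Γ : LFmls m) : Prop :=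
  (∀ a ∈ R, M.rel a.1 (I a.2.1) (I a.2.2)) → ∃ e ∈ Γ, Sat M (I e.1) e.2

/-- A labelled sequent is valid: satisfied in every model under every interpretation. -/
def SeqValid (n m : ℕ) (R : RAtoms m) (Γ : LFmls m) : Prop :=
  ∀ (W : Type) (M : ModelOn n m W) (I : ℕ → W), SeqSat M I R Γ

/-- An explicit injective numerical encoding of single-agent formulas. -/
def encFml : Fml 1 → ℕ
  | .pos p => Nat.pair 0 p
  | .neg p => Nat.pair 1 p
  | .and φ ψ => Nat.pair 2 (Nat.pair (encFml φ) (encFml ψ))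
  | .or φ ψ => Nat.pair 3 (Nat.pair (encFml φ) (encFml ψ))
  | .box φ => Nat.pair 4 (encFml φ)
  | .dia φ => Nat.pair 5 (encFml φ)
  | .ag _ φ => Nat.pair 6 (encFml φ)
  | .dag _ φ => Nat.pair 7 (encFml φ)

/-- Bit `t` of `S`. -/
def bitt (S t : ℕ) : Bool := S / 2^t % 2 == 1
/-- Number of valuation types for variable bound `k`. -/
def peF (k : ℕ) : ℕ := 2^k
/-- Bound for class codes. -/
def pcF (k : ℕ) : ℕ := 2^(2^k)
/-- Number of classes in canonical models. -/
def NNf (n k : ℕ) : ℕ := if n = 0 then pcF k else n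
/-- Number of possible (nonzero) class codes. -/
def EF (k : ℕ) : ℕ := pcF k - 1
/-- Digit `j` of `i` in base `E`. -/
def dig (E i j : ℕ) : ℕ := i / E^j % E
/-- Length of truth tables. -/
def Tlen (n k : ℕ) : ℕ := EF k ^ NNf n k * (NNf n k * peF k)
/-- Class code of column `j` in model `i`. -/
def Scl (n k i j : ℕ) : ℕ := dig (EF k) i j + 1

/-- One table entry for top connective `tag`, given subformula tables. -/
def ent (n k tag rest : ℕ) (T₁ T₂ : List Bool) (idx : ℕ) : Bool :=
  let pe := peF k
  let N := NNf n k
  let t := idx % pe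
  let q := idx / pe
  let j := q % N
  let i := q / N
  if tag = 0 then bitt t rest
  else if tag = 1 then !(bitt t rest)
  else if tag = 2 then T₁.getD idx false && T₂.getD idx false
  else if tag = 3 then T₁.getD idx false || T₂.getD idx false
  else if tag = 4 then (List.range (N * pe)).all fun r =>
    !(bitt (Scl n k i (r / pe)) (r % pe)) || T₁.getD ((i * N + r / pe) * pe + r % pe) false
  else if tag = 5 then (List.range (N * pe)).any fun r =>
    (bitt (Scl n k i (r / pe)) (r % pe)) && T₁.getD ((i * N + r / pe) * pe + r % pe) false
  else if tag = 6 then (List.range pe).all fun t' =>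
    !(bitt (Scl n k i j) t') || T₁.getD (q * pe + t') false
  else if tag = 7 then (List.range pe).any fun t' =>
    (bitt (Scl n k i j) t') && T₁.getD (q * pe + t') false
  else false

theorem pair_right_lt {a b : ℕ} (h : 1 ≤ a) : b < Nat.pair a b := by
  unfold Nat.pair; split <;> nlinarith

theorem unpair_right_lt {c : ℕ} (h : 1 ≤ c.unpair.1) : c.unpair.2 < c := by
  have := pair_right_lt (b := c.unpair.2) h
  rwa [Nat.pair_unpair] at this

/-- The table of the formula coded by `c` (variable bound `k`, `n`-choice parameter `n`). -/
def Ffun (n k : ℕ) (c : ℕ) : List Bool :=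
  if h : 2 ≤ c.unpair.1 then
    (List.range (Tlen n k)).map (ent n k c.unpair.1 c.unpair.2
      (Ffun n k (if c.unpair.1 ≤ 3 then c.unpair.2.unpair.1 else c.unpair.2))
      (Ffun n k c.unpair.2.unpair.2))
  else (List.range (Tlen n k)).map (ent n k c.unpair.1 c.unpair.2 [] [])
  termination_by c
  decreasing_by
  · have h2 : c.unpair.2 < c := unpair_right_lt (le_trans one_le_two h)
    split
    · exact lt_of_le_of_lt (Nat.unpair_left_le _) h2
    · exact h2
  · exact lt_of_le_of_lt (Nat.unpair_right_le _) (unpair_right_lt (le_trans one_le_two h))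

/-- The decision function. -/
def chk (n : ℕ) (c : ℕ) : Bool :=
  let k := c + 1
  (List.range (Tlen n k)).all fun idx =>
    !(bitt (Scl n k (idx / peF k / NNf n k) (idx / peF k % NNf n k)) (idx % peF k))
    || (Ffun n k c).getD idx false

theorem bitt_zero (t : ℕ) : bitt 0 t = false := by simp [bitt]

theorem le_of_bitt {S t : ℕ} (h : bitt S t = true) : 2^t ≤ S := by
  by_contra hc
  have : S / 2^t = 0 := Nat.div_eq_of_lt (by omega)
  simp [bitt, this] at h

theorem lt_of_bitt {S t B : ℕ} (h : bitt S t = true) (hS : S < 2^B) : t < B := by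
  have h1 := le_of_bitt h
  by_contra hc
  exact absurd (lt_of_le_of_lt (le_trans (Nat.pow_le_pow_right (by norm_num) (by omega)) h1) hS) (lt_irrefl _)

theorem exists_bitt {S : ℕ} (h : S ≠ 0) : ∃ t, bitt S t = true := by
  induction S using Nat.strong_induction_on with
  | _ S ih =>
    rcases Nat.even_or_odd S with he | ho
    · have he2 := Nat.even_iff.mp he
      have h2 : S / 2 ≠ 0 := by omega
      obtain ⟨t, ht⟩ := ih (S / 2) (by omega) h2
      refine ⟨t + 1, ?_⟩
      simpa [bitt, pow_succ, Nat.div_div_eq_div_mul, Nat.mul_comm] using ht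
    · exact ⟨0, by simp [bitt, Nat.odd_iff.mp ho]⟩

theorem bitt_2mul_add {x : ℕ} {b : Bool} (t : ℕ) :
    bitt (2 * x + b.toNat) (t + 1) = bitt x t := by
  have : (2 * x + b.toNat) / 2^(t+1) = x / 2^t := by
    rw [pow_succ, Nat.mul_comm (2^t) 2, ← Nat.div_div_eq_div_mul]
    congr 1
    cases b <;> simp <;> omega
  simp [bitt, this]

theorem bitt_2mul_add_zero {x : ℕ} {b : Bool} :
    bitt (2 * x + b.toNat) 0 = b := by
  cases b <;> simp [bitt] <;> omega

/-- Encode the first `B` bits of `f` as a number. -/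
def encB (f : ℕ → Bool) : ℕ → ℕ
  | 0 => 0
  | B + 1 => 2 * encB (fun t => f (t + 1)) B + (f 0).toNat

theorem encB_lt (f : ℕ → Bool) (B : ℕ) : encB f B < 2^B := by
  induction B generalizing f with
  | zero => simp [encB]
  | succ B ih =>
    have := ih (fun t => f (t+1))
    have hb : (f 0).toNat ≤ 1 := Bool.toNat_le _
    simp only [encB, pow_succ]
    omega

theorem bitt_encB {f : ℕ → Bool} {B t : ℕ} (h : t < B) : bitt (encB f B) t = f t := by
  induction B generalizing f t with
  | zero => omega
  | succ B ih =>
    cases t with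
    | zero => simpa [encB] using bitt_2mul_add_zero
    | succ t => simpa [encB, bitt_2mul_add] using ih (f := fun t => f (t+1)) (by omega)

theorem encB_congr {f g : ℕ → Bool} {B : ℕ} (h : ∀ t < B, f t = g t) :
    encB f B = encB g B := by
  induction B generalizing f g with
  | zero => rfl
  | succ B ih =>
    simp only [encB, h 0 (by omega), ih (fun t ht => h (t+1) (by omega))]

/-- Encode a list of base-`E` digits. -/
def encL (E : ℕ) : List ℕ → ℕ
  | [] => 0
  | d :: ds => d + E * encL E ds

theorem encL_lt {E : ℕ} (hE : 1 ≤ E) : ∀ {ds : List ℕ}, (∀ d ∈ ds, d < E) →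
    encL E ds < E ^ ds.length := by
  intro ds
  induction ds with
  | nil => simp [encL]
  | cons d ds ih =>
    intro h
    have h1 := ih (fun x hx => h x (List.mem_cons_of_mem _ hx))
    have h2 := h d List.mem_cons_self
    simp only [encL, List.length_cons, pow_succ]
    have h3 := Nat.mul_le_mul_left E (Nat.succ_le_of_lt h1)
    rw [Nat.mul_succ] at h3
    have h4 : E * E ^ ds.length = E ^ ds.length * E := Nat.mul_comm _ _
    omega

theorem dig_encL {E : ℕ} : ∀ {ds : List ℕ} {j : ℕ}, (∀ d ∈ ds, d < E) → j < ds.length →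
    dig E (encL E ds) j = ds.getD j 0 := by
  intro ds
  induction ds with
  | nil => simp
  | cons d ds ih =>
    intro j h hj
    have hd := h d List.mem_cons_self
    cases j with
    | zero => simp [dig, encL, Nat.add_mul_mod_self_left, Nat.mod_eq_of_lt hd]
    | succ j =>
      have : dig E (encL E (d :: ds)) (j+1) = dig E (encL E ds) j := by
        simp only [dig, encL, pow_succ]
        rw [Nat.mul_comm (E^j) E, ← Nat.div_div_eq_div_mul]
        congr 2
        rw [Nat.add_mul_div_left _ _ (by omega), Nat.div_eq_of_lt hd]
        omega
      rw [this, ih (fun x hx => h x (List.mem_cons_of_mem _ hx)) (by simpa using hj)]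
      simp

/-- Index decomposition arithmetic. -/
theorem idx_decomp {pe N i j t : ℕ} (ht : t < pe) (hj : j < N) :
    ((i * N + j) * pe + t) % pe = t ∧ ((i * N + j) * pe + t) / pe % N = j ∧
    ((i * N + j) * pe + t) / pe / N = i := by
  have h1 : ((i * N + j) * pe + t) % pe = t := by
    rw [Nat.add_comm, Nat.add_mul_mod_self_right, Nat.mod_eq_of_lt ht]
  have h2 : ((i * N + j) * pe + t) / pe = i * N + j := by
    rw [Nat.add_comm, Nat.add_mul_div_right _ _ (by omega), Nat.div_eq_of_lt ht]
    omega
  refine ⟨h1, ?_, ?_⟩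
  · rw [h2, Nat.add_comm, Nat.add_mul_mod_self_right, Nat.mod_eq_of_lt hj]
  · rw [h2]
    rw [Nat.add_comm, Nat.add_mul_div_right _ _ (by omega), Nat.div_eq_of_lt hj]
    omega

theorem idx_lt {pe N E i j t : ℕ} (ht : t < pe) (hj : j < N) (hi : i < E) :
    (i * N + j) * pe + t < E * (N * pe) := by
  have h1 : i * N + j + 1 ≤ E * N := by
    calc i * N + j + 1 ≤ i * N + N := by omega
    _ = (i + 1) * N := by ring
    _ ≤ E * N := Nat.mul_le_mul_right _ (by omega)
  calc (i * N + j) * pe + t < (i * N + j) * pe + pe := by omega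
  _ = (i * N + j + 1) * pe := by ring
  _ ≤ (E * N) * pe := Nat.mul_le_mul_right _ h1
  _ = E * (N * pe) := by ring

theorem getD_map_range {α : Type*} {f : ℕ → α} {L i : ℕ} (h : i < L) (d : α) :
    ((List.range L).map f).getD i d = f i := by
  rw [List.getD_eq_getElem?_getD, List.getElem?_map, List.getElem?_range h]
  rfl


theorem ent_junk {n k tag rest : ℕ} {T₁ T₂ : List Bool} {idx : ℕ} (h : ¬ 2 ≤ tag) :
    ent n k tag rest T₁ T₂ idx = ent n k tag rest [] [] idx := by
  have : tag = 0 ∨ tag = 1 := by omega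
  rcases this with h | h <;> simp [ent, h]

theorem Ffun_getD (n k c idx : ℕ) (h : idx < Tlen n k) :
    (Ffun n k c).getD idx false =
    ent n k c.unpair.1 c.unpair.2
      (Ffun n k (if c.unpair.1 ≤ 3 then c.unpair.2.unpair.1 else c.unpair.2))
      (Ffun n k c.unpair.2.unpair.2) idx := by
  rw [Ffun]
  split
  · rw [getD_map_range h]
  · rw [getD_map_range h]
    exact (ent_junk (by assumption)).symm

theorem getD_pos (n k p idx : ℕ) (h : idx < Tlen n k) :
    (Ffun n k (encFml (.pos p))).getD idx false = bitt (idx % peF k) p := by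
  rw [Ffun_getD n k _ idx h]
  simp only [encFml, Nat.unpair_pair]
  norm_num [ent]

theorem getD_neg (n k p idx : ℕ) (h : idx < Tlen n k) :
    (Ffun n k (encFml (.neg p))).getD idx false = !(bitt (idx % peF k) p) := by
  rw [Ffun_getD n k _ idx h]
  simp only [encFml, Nat.unpair_pair]
  norm_num [ent]

theorem getD_and (n k : ℕ) (φ ψ : Fml 1) (idx : ℕ) (h : idx < Tlen n k) :
    (Ffun n k (encFml (.and φ ψ))).getD idx false =
    ((Ffun n k (encFml φ)).getD idx false && (Ffun n k (encFml ψ)).getD idx false) := by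
  rw [Ffun_getD n k _ idx h]
  simp only [encFml, Nat.unpair_pair]
  norm_num [ent]

theorem getD_or (n k : ℕ) (φ ψ : Fml 1) (idx : ℕ) (h : idx < Tlen n k) :
    (Ffun n k (encFml (.or φ ψ))).getD idx false =
    ((Ffun n k (encFml φ)).getD idx false || (Ffun n k (encFml ψ)).getD idx false) := by
  rw [Ffun_getD n k _ idx h]
  simp only [encFml, Nat.unpair_pair]
  norm_num [ent]

theorem getD_box (n k : ℕ) (φ : Fml 1) (idx : ℕ) (h : idx < Tlen n k) :
    (Ffun n k (encFml (.box φ))).getD idx false =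
    ((List.range (NNf n k * peF k)).all fun r =>
      !(bitt (Scl n k (idx / peF k / NNf n k) (r / peF k)) (r % peF k)) ||
      (Ffun n k (encFml φ)).getD ((idx / peF k / NNf n k * NNf n k + r / peF k) * peF k + r % peF k) false) := by
  rw [Ffun_getD n k _ idx h]
  simp only [encFml, Nat.unpair_pair]
  norm_num [ent]

theorem getD_dia (n k : ℕ) (φ : Fml 1) (idx : ℕ) (h : idx < Tlen n k) :
    (Ffun n k (encFml (.dia φ))).getD idx false =
    ((List.range (NNf n k * peF k)).any fun r =>
      (bitt (Scl n k (idx / peF k / NNf n k) (r / peF k)) (r % peF k)) &&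
      (Ffun n k (encFml φ)).getD ((idx / peF k / NNf n k * NNf n k + r / peF k) * peF k + r % peF k) false) := by
  rw [Ffun_getD n k _ idx h]
  simp only [encFml, Nat.unpair_pair]
  norm_num [ent]

theorem getD_ag (n k : ℕ) (i : Fin 1) (φ : Fml 1) (idx : ℕ) (h : idx < Tlen n k) :
    (Ffun n k (encFml (.ag i φ))).getD idx false =
    ((List.range (peF k)).all fun t' =>
      !(bitt (Scl n k (idx / peF k / NNf n k) (idx / peF k % NNf n k)) t') ||
      (Ffun n k (encFml φ)).getD (idx / peF k * peF k + t') false) := by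
  rw [Ffun_getD n k _ idx h]
  simp only [encFml, Nat.unpair_pair]
  norm_num [ent]

theorem getD_dag (n k : ℕ) (i : Fin 1) (φ : Fml 1) (idx : ℕ) (h : idx < Tlen n k) :
    (Ffun n k (encFml (.dag i φ))).getD idx false =
    ((List.range (peF k)).any fun t' =>
      (bitt (Scl n k (idx / peF k / NNf n k) (idx / peF k % NNf n k)) t') &&
      (Ffun n k (encFml φ)).getD (idx / peF k * peF k + t') false) := by
  rw [Ffun_getD n k _ idx h]
  simp only [encFml, Nat.unpair_pair]
  norm_num [ent]


/-- All propositional variables in `φ` are `< k`. -/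
def varsLt (k : ℕ) : Fml 1 → Prop
  | .pos p => p < k
  | .neg p => p < k
  | .and φ ψ => varsLt k φ ∧ varsLt k ψ
  | .or φ ψ => varsLt k φ ∧ varsLt k ψ
  | .box φ => varsLt k φ
  | .dia φ => varsLt k φ
  | .ag _ φ => varsLt k φ
  | .dag _ φ => varsLt k φ

theorem varsLt_mono : ∀ {φ : Fml 1} {k k' : ℕ}, k ≤ k' → varsLt k φ → varsLt k' φ := by
  intro φ
  induction φ with
  | pos p => intro k k' hk h; simp only [varsLt] at h ⊢; omega
  | neg p => intro k k' hk h; simp only [varsLt] at h ⊢; omega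
  | and φ ψ ihφ ihψ => intro k k' hk h; exact ⟨ihφ hk h.1, ihψ hk h.2⟩
  | or φ ψ ihφ ihψ => intro k k' hk h; exact ⟨ihφ hk h.1, ihψ hk h.2⟩
  | box φ ih => intro k k' hk h; exact ih hk h
  | dia φ ih => intro k k' hk h; exact ih hk h
  | ag i φ ih => intro k k' hk h; exact ih hk h
  | dag i φ ih => intro k k' hk h; exact ih hk h

theorem varsLt_encFml : ∀ φ : Fml 1, varsLt (encFml φ + 1) φ := by
  intro φ
  induction φ with
  | pos p => simpa [varsLt, encFml] using Nat.lt_succ_of_le (Nat.right_le_pair 0 p)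
  | neg p => simpa [varsLt, encFml] using Nat.lt_succ_of_le (Nat.right_le_pair 1 p)
  | and φ ψ ihφ ihψ =>
      refine ⟨varsLt_mono ?_ ihφ, varsLt_mono ?_ ihψ⟩ <;> simp only [encFml] <;>
      have h2 := Nat.right_le_pair 2 (Nat.pair (encFml φ) (encFml ψ))
      · have := Nat.left_le_pair (encFml φ) (encFml ψ); omega
      · have := Nat.right_le_pair (encFml φ) (encFml ψ); omega
  | or φ ψ ihφ ihψ =>
      refine ⟨varsLt_mono ?_ ihφ, varsLt_mono ?_ ihψ⟩ <;> simp only [encFml] <;>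
      have h2 := Nat.right_le_pair 3 (Nat.pair (encFml φ) (encFml ψ))
      · have := Nat.left_le_pair (encFml φ) (encFml ψ); omega
      · have := Nat.right_le_pair (encFml φ) (encFml ψ); omega
  | box φ ih => exact varsLt_mono (by simpa [encFml] using Nat.right_le_pair 4 (encFml φ)) ih
  | dia φ ih => exact varsLt_mono (by simpa [encFml] using Nat.right_le_pair 5 (encFml φ)) ih
  | ag i φ ih => exact varsLt_mono (by simpa [encFml] using Nat.right_le_pair 6 (encFml φ)) ih
  | dag i φ ih => exact varsLt_mono (by simpa [encFml] using Nat.right_le_pair 7 (encFml φ)) ih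

theorem Scl_lt (n k iLs j : ℕ) : Scl n k iLs j < pcF k := by
  have hE : 1 ≤ EF k := by
    have : 2 ≤ pcF k := by
      have : 1 ≤ 2^k := Nat.one_le_two_pow
      calc (2:ℕ) = 2^1 := by norm_num
      _ ≤ 2^(2^k) := Nat.pow_le_pow_right (by norm_num) this
    simp only [EF]; omega
  have : dig (EF k) iLs j < EF k := Nat.mod_lt _ (by omega)
  simp only [Scl, EF] at *
  have h1 : 1 ≤ pcF k := Nat.one_le_two_pow
  omega

theorem peF_pos (k : ℕ) : 0 < peF k := by unfold peF; positivity

theorem NNf_pos (n k : ℕ) : 0 < NNf n k := by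
  unfold NNf
  split
  · unfold pcF; positivity
  · omega

/-- Master truth lemma: tables computed by `Ffun` match satisfaction in any model
suitably mapped onto a canonical structure. -/
theorem master (n k : ℕ) {W : Type} (M : ModelOn n 1 W)
    (iLs : ℕ) (hiLs : iLs < EF k ^ NNf n k) (cl vt : W → ℕ)
    (h1 : ∀ u, cl u < NNf n k)
    (h2 : ∀ u, vt u < peF k ∧ bitt (Scl n k iLs (cl u)) (vt u) = true)
    (h3 : ∀ u p, p < k → (bitt (vt u) p = true ↔ u ∈ M.val p))
    (h4 : ∀ u u', M.rel 0 u u' → cl u' = cl u)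
    (h5 : ∀ u t', bitt (Scl n k iLs (cl u)) t' = true → ∃ u', M.rel 0 u u' ∧ vt u' = t')
    (h6 : ∀ j t', j < NNf n k → bitt (Scl n k iLs j) t' = true →
        ∃ u', dig (EF k) iLs (cl u') = dig (EF k) iLs j ∧ vt u' = t') :
    ∀ φ : Fml 1, varsLt k φ → ∀ (u : W) (j : ℕ), j < NNf n k →
    dig (EF k) iLs j = dig (EF k) iLs (cl u) →
    ((Ffun n k (encFml φ)).getD ((iLs * NNf n k + j) * peF k + vt u) false = true ↔ Sat M u φ) := by
  intro φ
  induction φ with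
    (intro hv u j hj hdig
     obtain ⟨hvt, hbit⟩ := h2 u
     have hidx : (iLs * NNf n k + j) * peF k + vt u < Tlen n k := idx_lt hvt hj hiLs
     obtain ⟨e1, e2, e3⟩ := idx_decomp (i := iLs) hvt hj)
  | pos p =>
      rw [getD_pos n k p _ hidx, e1]
      simpa [Sat] using h3 u p hv
  | neg p =>
      rw [getD_neg n k p _ hidx, e1]
      rw [Bool.not_eq_true']
      rw [← Bool.not_eq_true]
      simpa [Sat] using not_congr (h3 u p hv)
  | and φ ψ ihφ ihψ =>
      rw [getD_and n k φ ψ _ hidx, Bool.and_eq_true]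
      simp only [Sat]
      exact and_congr (ihφ hv.1 u j hj hdig) (ihψ hv.2 u j hj hdig)
  | or φ ψ ihφ ihψ =>
      rw [getD_or n k φ ψ _ hidx, Bool.or_eq_true]
      simp only [Sat]
      exact or_congr (ihφ hv.1 u j hj hdig) (ihψ hv.2 u j hj hdig)
  | box φ ih =>
      rw [getD_box n k φ _ hidx, e3]
      rw [List.all_eq_true]
      simp only [Sat, List.mem_range, Bool.or_eq_true, Bool.not_eq_true', ← Bool.not_eq_true]
      constructor
      · intro h u'
        obtain ⟨hvt', hbit'⟩ := h2 u'
        have hr : cl u' * peF k + vt u' < NNf n k * peF k := by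
          have := h1 u'
          have hxx : (cl u' + 1) * peF k = cl u' * peF k + peF k := by ring
          calc cl u' * peF k + vt u' < (cl u' + 1) * peF k := by omega
          _ ≤ NNf n k * peF k := Nat.mul_le_mul_right _ (by omega)
        obtain ⟨f1, f2, _⟩ := idx_decomp (i := 0) hvt' (h1 u')
        simp only [Nat.zero_mul, Nat.zero_add] at f1 f2
        have := h (cl u' * peF k + vt u') hr
        rw [f1] at this
        have f2' : (cl u' * peF k + vt u') / peF k = cl u' := by
          rw [Nat.add_comm, Nat.add_mul_div_right _ _ (peF_pos k), Nat.div_eq_of_lt hvt']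
          omega
        rw [f2'] at this
        rcases this with hfalse | htrue
        · rw [hbit'] at hfalse; exact absurd hfalse (by simp)
        · exact (ih hv u' (cl u') (h1 u') rfl).mp htrue
      · intro h r hr
        set j' := r / peF k with hj'def
        set t' := r % peF k with ht'def
        have hpe : 0 < peF k := peF_pos k
        have hj'N : j' < NNf n k := by
          rw [hj'def]
          exact Nat.div_lt_of_lt_mul (Nat.mul_comm (NNf n k) (peF k) ▸ hr)
        by_cases hb : bitt (Scl n k iLs j') t' = true
        · right
          obtain ⟨u', hdig', hvt'⟩ := h6 j' t' hj'N hb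
          rw [← hvt']
          exact (ih hv u' j' hj'N hdig'.symm).mpr (h u')
        · left
          exact Bool.not_eq_true _ ▸ (by simpa using hb)
  | dia φ ih =>
      rw [getD_dia n k φ _ hidx, e3]
      rw [List.any_eq_true]
      simp only [Sat, List.mem_range, Bool.and_eq_true]
      constructor
      · rintro ⟨r, hr, hb, ht⟩
        set j' := r / peF k
        set t' := r % peF k
        have hpe : 0 < peF k := peF_pos k
        have hj'N : j' < NNf n k := Nat.div_lt_of_lt_mul (Nat.mul_comm (NNf n k) (peF k) ▸ hr)
        obtain ⟨u', hdig', hvt'⟩ := h6 j' t' hj'N hb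
        rw [← hvt'] at ht
        exact ⟨u', (ih hv u' j' hj'N hdig'.symm).mp ht⟩
      · rintro ⟨u', hu'⟩
        obtain ⟨hvt', hbit'⟩ := h2 u'
        refine ⟨cl u' * peF k + vt u', ?_, ?_, ?_⟩
        · have := h1 u'
          have hxx : (cl u' + 1) * peF k = cl u' * peF k + peF k := by ring
          calc cl u' * peF k + vt u' < (cl u' + 1) * peF k := by omega
          _ ≤ NNf n k * peF k := Nat.mul_le_mul_right _ (by omega)
        · have f2' : (cl u' * peF k + vt u') / peF k = cl u' := by
            rw [Nat.add_comm, Nat.add_mul_div_right _ _ (peF_pos k), Nat.div_eq_of_lt hvt']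
            omega
          have f1' : (cl u' * peF k + vt u') % peF k = vt u' := by
            rw [Nat.add_comm, Nat.add_mul_mod_self_right, Nat.mod_eq_of_lt hvt']
          rw [f1', f2']
          exact hbit'
        · have f2' : (cl u' * peF k + vt u') / peF k = cl u' := by
            rw [Nat.add_comm, Nat.add_mul_div_right _ _ (peF_pos k), Nat.div_eq_of_lt hvt']
            omega
          have f1' : (cl u' * peF k + vt u') % peF k = vt u' := by
            rw [Nat.add_comm, Nat.add_mul_mod_self_right, Nat.mod_eq_of_lt hvt']
          rw [f1', f2']
          exact (ih hv u' (cl u') (h1 u') rfl).mpr hu'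
  | ag i φ ih =>
      have hi : i = 0 := Subsingleton.elim i 0
      subst hi
      rw [getD_ag n k 0 φ _ hidx, e2, e3]
      have hq : (iLs * NNf n k + j) * peF k + vt u = ((iLs * NNf n k + j) * peF k + vt u) := rfl
      have hqval : ((iLs * NNf n k + j) * peF k + vt u) / peF k = iLs * NNf n k + j := by
        rw [Nat.add_comm, Nat.add_mul_div_right _ _ (peF_pos k), Nat.div_eq_of_lt hvt]
        omega
      rw [hqval]
      rw [List.all_eq_true]
      simp only [Sat, List.mem_range, Bool.or_eq_true, Bool.not_eq_true']
      have hSeq : Scl n k iLs j = Scl n k iLs (cl u) := by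
        simp only [Scl, hdig]
      constructor
      · intro h u' hrel
        have hclu' : cl u' = cl u := h4 u u' hrel
        obtain ⟨hvt', hbit'⟩ := h2 u'
        have := h (vt u') hvt'
        rcases this with hfalse | htrue
        · rw [hSeq, ← hclu'] at hfalse
          rw [hbit'] at hfalse; exact absurd hfalse (by simp)
        · exact (ih hv u' j hj (by rw [hdig, hclu'])).mp htrue
      · intro h t' ht'
        by_cases hb : bitt (Scl n k iLs j) t' = true
        · right
          rw [hSeq] at hb
          obtain ⟨u', hrel, hvt'⟩ := h5 u t' hb
          rw [← hvt']
          have hclu' : cl u' = cl u := h4 u u' hrel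
          exact (ih hv u' j hj (by rw [hdig, hclu'])).mpr (h u' hrel)
        · left
          simpa using hb
  | dag i φ ih =>
      have hi : i = 0 := Subsingleton.elim i 0
      subst hi
      rw [getD_dag n k 0 φ _ hidx, e2, e3]
      have hqval : ((iLs * NNf n k + j) * peF k + vt u) / peF k = iLs * NNf n k + j := by
        rw [Nat.add_comm, Nat.add_mul_div_right _ _ (peF_pos k), Nat.div_eq_of_lt hvt]
        omega
      rw [hqval]
      rw [List.any_eq_true]
      simp only [Sat, List.mem_range, Bool.and_eq_true]
      have hSeq : Scl n k iLs j = Scl n k iLs (cl u) := by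
        simp only [Scl, hdig]
      constructor
      · rintro ⟨t', ht', hb, htab⟩
        rw [hSeq] at hb
        obtain ⟨u', hrel, hvt'⟩ := h5 u t' hb
        rw [← hvt'] at htab
        have hclu' : cl u' = cl u := h4 u u' hrel
        exact ⟨u', hrel, (ih hv u' j hj (by rw [hdig, hclu'])).mp htab⟩
      · rintro ⟨u', hrel, hu'⟩
        obtain ⟨hvt', hbit'⟩ := h2 u'
        have hclu' : cl u' = cl u := h4 u u' hrel
        refine ⟨vt u', hvt', ?_, ?_⟩
        · rw [hSeq, ← hclu']
          exact hbit'
        · exact (ih hv u' j hj (by rw [hdig, hclu'])).mpr hu'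


/-- Worlds of the canonical model number `iLs`. -/
def CW (n k iLs : ℕ) : Type :=
  {x : ℕ × ℕ // x.1 < NNf n k ∧ x.2 < peF k ∧ bitt (Scl n k iLs x.1) x.2 = true}

theorem Scl_lt' (n k iLs j : ℕ) : Scl n k iLs j < 2 ^ peF k := Scl_lt n k iLs j

theorem Scl_ne (n k iLs j : ℕ) : Scl n k iLs j ≠ 0 := Nat.succ_ne_zero _

theorem CW_nonempty (n k iLs : ℕ) : Nonempty (CW n k iLs) := by
  obtain ⟨t, ht⟩ := exists_bitt (Scl_ne n k iLs 0)
  exact ⟨⟨(0, t), NNf_pos n k, lt_of_bitt ht (Scl_lt' n k iLs 0), ht⟩⟩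

/-- The canonical model number `iLs`. -/
def CM (n k iLs : ℕ) : ModelOn n 1 (CW n k iLs) where
  nonemp := CW_nonempty n k iLs
  rel := fun _ x y => x.val.1 = y.val.1
  refl := fun _ _ => rfl
  symm := fun _ _ _ h => h.symm
  trans := fun _ _ _ _ h h' => h.trans h'
  ioa := fun u => ⟨u 0, fun i => by rw [Subsingleton.elim i 0]⟩
  apc := by
    intro hn i w
    have hNN : NNf n k = n := by simp [NNf, Nat.pos_iff_ne_zero.mp hn]
    obtain ⟨x, y, hxy, hf⟩ := Fintype.exists_ne_map_eq_of_card_lt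
      (fun a => (⟨(w a).val.1, by have := (w a).prop.1; omega⟩ : Fin n)) (by simp)
    have hval : (w x).val.1 = (w y).val.1 := congrArg Fin.val hf
    rcases Ne.lt_or_gt hxy with h | h
    · exact ⟨x, y, h, hval⟩
    · exact ⟨y, x, h, hval.symm⟩
  val := fun p => {x | bitt x.val.2 p = true}

theorem valid_implies_chk (n : ℕ) (φ : Fml 1) (hval : Valid n 1 φ) :
    chk n (encFml φ) = true := by
  set k := encFml φ + 1 with hk
  rw [chk, List.all_eq_true]
  intro idx hidxmem
  rw [List.mem_range] at hidxmem
  rw [← hk] at hidxmem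
  rw [Bool.or_eq_true, Bool.not_eq_true']
  set pe := peF k with hpedef
  set N := NNf n k with hNdef
  set t := idx % pe with htdef
  set j := idx / pe % N with hjdef
  set i := idx / pe / N with hidef
  by_cases hb : bitt (Scl n k i j) t = true
  · right
    have hpe : 0 < pe := peF_pos k
    have hN : 0 < N := NNf_pos n k
    have ht : t < pe := Nat.mod_lt _ hpe
    have hj : j < N := Nat.mod_lt _ hN
    have hi : i < EF k ^ N := by
      have h1 : idx < pe * (EF k ^ N * N) := by
        have he : Tlen n k = pe * (EF k ^ N * N) := by
          simp only [Tlen, hpedef, hNdef]; ring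
        omega
      have h2 : idx / pe < EF k ^ N * N := Nat.div_lt_of_lt_mul h1
      have h3 : idx / pe < N * EF k ^ N := by rw [Nat.mul_comm] at h2; exact h2
      exact Nat.div_lt_of_lt_mul h3
    set u : CW n k i := ⟨(j, t), hj, ht, hb⟩ with hudef
    have hmaster := master n k (CM n k i) i hi (fun x => x.val.1) (fun x => x.val.2)
      (fun x => x.prop.1) (fun x => ⟨x.prop.2.1, x.prop.2.2⟩)
      (fun x p _ => Iff.rfl)
      (fun x y h => h.symm)
      (fun x t' hb' => ⟨⟨(x.val.1, t'), x.prop.1, lt_of_bitt hb' (Scl_lt' n k i _), hb'⟩, rfl, rfl⟩)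
      (fun j' t' hj' hb' => ⟨⟨(j', t'), hj', lt_of_bitt hb' (Scl_lt' n k i _), hb'⟩, rfl, rfl⟩)
      φ (varsLt_encFml φ) u j hj rfl
    have heq : (i * N + j) * pe + t = idx := by
      have hb2 : i * N + j = idx / pe := by
        have h := Nat.div_add_mod (idx / pe) N
        rw [Nat.mul_comm] at h
        rw [hidef, hjdef]
        omega
      rw [hb2]
      have h := Nat.div_add_mod idx pe
      rw [Nat.mul_comm] at h
      rw [htdef]
      omega
    rw [heq] at hmaster
    exact hmaster.mpr (hval _ (CM n k i) u)
  · left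
    exact Bool.not_eq_true _ ▸ (by simpa using hb)


theorem EF_pos (k : ℕ) : 1 ≤ EF k := by
  have h2 : 2 ≤ pcF k := by
    have h1 : 1 ≤ 2^k := Nat.one_le_two_pow
    calc (2:ℕ) = 2^1 := by norm_num
    _ ≤ 2^(2^k) := Nat.pow_le_pow_right (by norm_num) h1
  simp only [EF]
  omega

theorem pcF_eq (k : ℕ) : pcF k = 2 ^ peF k := rfl

theorem getD_map_sub {l : List ℕ} {j : ℕ} (h : j < l.length) :
    (l.map (· - 1)).getD j 0 = l.getD j 0 - 1 := by
  rw [List.getD_eq_getElem _ _ (by simpa using h), List.getD_eq_getElem _ _ h,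
    List.getElem_map]

theorem chk_implies_valid (n : ℕ) (φ : Fml 1) (hchk : chk n (encFml φ) = true) :
    Valid n 1 φ := by
  intro W M w
  classical
  set k := encFml φ + 1 with hk
  -- the valuation type and class type of a world
  set vt : W → ℕ := fun u => encB (fun p => decide (u ∈ M.val p)) k with hvtdef
  set ct : W → ℕ := fun u =>
    encB (fun t => decide (∃ u', M.rel 0 u u' ∧ vt u' = t)) (peF k) with hctdef
  have hvt_lt : ∀ u, vt u < peF k := fun u => encB_lt _ _
  have hvt_bit : ∀ u p, p < k → bitt (vt u) p = decide (u ∈ M.val p) :=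
    fun u p hp => bitt_encB hp
  have hct_bit : ∀ u t, t < peF k →
      bitt (ct u) t = decide (∃ u', M.rel 0 u u' ∧ vt u' = t) :=
    fun u t ht => bitt_encB ht
  have hct_lt : ∀ u, ct u < pcF k := fun u => encB_lt _ _
  have hct_bit_self : ∀ u, bitt (ct u) (vt u) = true := by
    intro u
    rw [hct_bit u _ (hvt_lt u)]
    exact decide_eq_true ⟨u, M.refl 0 u, rfl⟩
  have hct_pos : ∀ u, 1 ≤ ct u := by
    intro u
    by_contra hc
    have h0 : ct u = 0 := by omega
    have := hct_bit_self u
    rw [h0, bitt_zero] at this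
    exact Bool.false_ne_true this
  have hrel_ct : ∀ u u', M.rel 0 u u' → ct u = ct u' := by
    intro u u' hrel
    apply encB_congr
    intro t _
    apply decide_eq_decide.mpr
    constructor
    · rintro ⟨u'', h1, h2⟩
      exact ⟨u'', M.trans 0 _ _ _ (M.symm 0 _ _ hrel) h1, h2⟩
    · rintro ⟨u'', h1, h2⟩
      exact ⟨u'', M.trans 0 _ _ _ hrel h1, h2⟩
  -- the finite set of realized class types
  set T : Finset ℕ := (Finset.range (pcF k)).filter (fun S => ∃ u, ct u = S) with hTdef
  have hctT : ∀ u, ct u ∈ T := fun u =>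
    Finset.mem_filter.mpr ⟨Finset.mem_range.mpr (hct_lt u), u, rfl⟩
  have hTmem : ∀ S ∈ T, ∃ u, ct u = S := fun S hS => (Finset.mem_filter.mp hS).2
  have hTcard : T.card ≤ NNf n k := by
    rcases Nat.eq_zero_or_pos n with hn | hn
    · have hsub : T ⊆ Finset.range (pcF k) := Finset.filter_subset _ _
      have hcard := Finset.card_le_card hsub
      rw [Finset.card_range] at hcard
      simp only [NNf, hn, if_pos rfl]
      exact hcard
    · have hNn : NNf n k = n := by simp [NNf, Nat.pos_iff_ne_zero.mp hn]
      rw [hNn]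
      by_contra hgt
      push_neg at hgt
      have hnd := Finset.nodup_toList T
      have hlen : T.toList.length = T.card := Finset.length_toList T
      have hidx : ∀ a : Fin (n+1), (a : ℕ) < T.toList.length := by
        intro a
        have := a.isLt
        omega
      have hwit : ∀ a : Fin (n+1), ∃ u, ct u = T.toList[(a:ℕ)]'(hidx a) := by
        intro a
        exact hTmem _ (Finset.mem_toList.mp (List.getElem_mem _))
      choose wfun hwfun using hwit
      obtain ⟨a, b, hab, hr⟩ := M.apc hn 0 wfun
      have heq : T.toList[(a:ℕ)]'(hidx a) = T.toList[(b:ℕ)]'(hidx b) := by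
        rw [← hwfun a, ← hwfun b, hrel_ct _ _ hr]
      have : (a : ℕ) = (b : ℕ) := by
        have := (List.Nodup.getElem_inj_iff hnd).mp heq
        exact this
      omega
  -- assemble the list of classes and its code
  set Ls : List ℕ := T.toList ++ List.replicate (NNf n k - T.card) (ct w) with hLsdef
  have hLslen : Ls.length = NNf n k := by
    simp only [hLsdef, List.length_append, Finset.length_toList, List.length_replicate]
    omega
  have hLsmem : ∀ S ∈ Ls, ∃ u, ct u = S := by
    intro S hS
    rcases List.mem_append.mp hS with h | h
    · exact hTmem _ (Finset.mem_toList.mp h)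
    · exact ⟨w, (List.eq_of_mem_replicate h).symm⟩
  have hmemLs : ∀ u, ct u ∈ Ls :=
    fun u => List.mem_append.mpr (Or.inl (Finset.mem_toList.mpr (hctT u)))
  have hLs_lt : ∀ S ∈ Ls, S - 1 < EF k := by
    intro S hS
    obtain ⟨u, hu⟩ := hLsmem S hS
    have h1 := hct_lt u
    have h2 := hct_pos u
    have h3 := EF_pos k
    simp only [EF] at *
    omega
  set iLs : ℕ := encL (EF k) (Ls.map (· - 1)) with hiLsdef
  have hiLs : iLs < EF k ^ NNf n k := by
    have := encL_lt (EF_pos k) (ds := Ls.map (· - 1)) (by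
      intro d hd
      obtain ⟨S, hS, rfl⟩ := List.mem_map.mp hd
      exact hLs_lt S hS)
    rwa [List.length_map, hLslen] at this
  have hdig : ∀ j, j < NNf n k → dig (EF k) iLs j = Ls.getD j 0 - 1 := by
    intro j hj
    rw [hiLsdef, dig_encL (by
        intro d hd
        obtain ⟨S, hS, rfl⟩ := List.mem_map.mp hd
        exact hLs_lt S hS) (by rw [List.length_map, hLslen]; exact hj)]
    exact getD_map_sub (by rw [hLslen]; exact hj)
  have hScl : ∀ j, j < NNf n k → Scl n k iLs j = Ls.getD j 0 := by
    intro j hj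
    have h1 := hdig j hj
    have hmem : Ls.getD j 0 ∈ Ls := by
      rw [List.getD_eq_getElem _ _ (by rw [hLslen]; exact hj)]
      exact List.getElem_mem _
    obtain ⟨u, hu⟩ := hLsmem _ hmem
    have := hct_pos u
    simp only [Scl, h1]
    omega
  -- the class / column map
  set cl : W → ℕ := fun u => Ls.idxOf (ct u) with hcldef
  have hcl_lt : ∀ u, cl u < NNf n k := fun u => by
    rw [← hLslen]
    exact List.idxOf_lt_length_iff.mpr (hmemLs u)
  have hScl_cl : ∀ u, Scl n k iLs (cl u) = ct u := by
    intro u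
    rw [hScl _ (hcl_lt u)]
    rw [List.getD_eq_getElem _ _ (List.idxOf_lt_length_iff.mpr (hmemLs u))]
    exact List.getElem_idxOf _
  -- apply the master lemma
  have hmaster := master n k M iLs hiLs cl vt hcl_lt
    (fun u => ⟨hvt_lt u, by rw [hScl_cl u]; exact hct_bit_self u⟩)
    (fun u p hp => by rw [hvt_bit u p hp]; exact decide_eq_true_iff)
    (fun u u' hrel => by
      simp only [hcldef]
      rw [hrel_ct u u' hrel])
    (fun u t' hb => by
      rw [hScl_cl u] at hb
      have ht' : t' < peF k := lt_of_bitt hb (by rw [← pcF_eq]; exact hct_lt u)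
      rw [hct_bit u t' ht'] at hb
      exact of_decide_eq_true hb)
    (fun j t' hj hb => by
      rw [hScl j hj] at hb
      have hmem : Ls.getD j 0 ∈ Ls := by
        rw [List.getD_eq_getElem _ _ (by rw [hLslen]; exact hj)]
        exact List.getElem_mem _
      obtain ⟨u₀, hu₀⟩ := hLsmem _ hmem
      rw [← hu₀] at hb
      have ht' : t' < peF k := lt_of_bitt hb (by rw [← pcF_eq]; exact hct_lt u₀)
      rw [hct_bit u₀ t' ht'] at hb
      obtain ⟨u'', hrel, hvtu⟩ := of_decide_eq_true hb
      refine ⟨u'', ?_, hvtu⟩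
      have : Scl n k iLs (cl u'') = Scl n k iLs j := by
        rw [hScl_cl u'', ← hrel_ct _ _ hrel, hu₀, hScl j hj]
      simp only [Scl] at this
      omega)
    φ (varsLt_encFml φ) w (cl w) (hcl_lt w) rfl
  -- extract the table entry from the checker
  rw [← hmaster]
  rw [chk, List.all_eq_true] at hchk
  have hvtw := hvt_lt w
  have hclw := hcl_lt w
  set idx : ℕ := (iLs * NNf n k + cl w) * peF k + vt w with hidxdef
  have hidxlt : idx < Tlen n k := idx_lt hvtw hclw hiLs
  have hmem : idx ∈ List.range (Tlen n (encFml φ + 1)) := by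
    rw [List.mem_range, ← hk]
    exact hidxlt
  have hentry := hchk idx hmem
  rw [Bool.or_eq_true, Bool.not_eq_true'] at hentry
  obtain ⟨e1, e2, e3⟩ := idx_decomp (i := iLs) hvtw hclw
  rw [← hk] at hentry
  rw [e1, e2, e3] at hentry
  rcases hentry with hfalse | htrue
  · rw [hScl_cl w, hct_bit_self w] at hfalse
    exact absurd hfalse (by simp)
  · exact htrue


theorem encFml_injective : Function.Injective encFml := by
  intro φ
  induction φ with
  | pos p =>
      intro ψ h
      cases ψ <;> simp [encFml, Nat.pair_eq_pair] at h
      · rw [h]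
  | neg p =>
      intro ψ h
      cases ψ <;> simp [encFml, Nat.pair_eq_pair] at h
      · rw [h]
  | and φ₁ φ₂ ih₁ ih₂ =>
      intro ψ h
      cases ψ <;> simp [encFml, Nat.pair_eq_pair] at h
      · rw [ih₁ h.1, ih₂ h.2]
  | or φ₁ φ₂ ih₁ ih₂ =>
      intro ψ h
      cases ψ <;> simp [encFml, Nat.pair_eq_pair] at h
      · rw [ih₁ h.1, ih₂ h.2]
  | box φ₁ ih =>
      intro ψ h
      cases ψ <;> simp [encFml, Nat.pair_eq_pair] at h
      · rw [ih h]
  | dia φ₁ ih =>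
      intro ψ h
      cases ψ <;> simp [encFml, Nat.pair_eq_pair] at h
      · rw [ih h]
  | ag i φ₁ ih =>
      intro ψ h
      cases ψ <;> simp [encFml, Nat.pair_eq_pair] at h
      · rename_i i' ψ'
        rw [ih h, Subsingleton.elim i i']
  | dag i φ₁ ih =>
      intro ψ h
      cases ψ <;> simp [encFml, Nat.pair_eq_pair] at h
      · rename_i i' ψ'
        rw [ih h, Subsingleton.elim i i']


open Primrec in
theorem primrec_pow : Primrec₂ (HPow.hPow : ℕ → ℕ → ℕ) :=
  Primrec₂.unpaired'.mp Nat.Primrec.pow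

open Primrec in
theorem primrec_bitt : Primrec₂ bitt :=
  Primrec.to₂ <| Primrec.beq.comp
    (nat_mod.comp (nat_div.comp fst (primrec_pow.comp (const 2) snd)) (const 2))
    (const 1)

open Primrec in
theorem primrec_list_all {α β : Type*} [Primcodable α] [Primcodable β]
    {f : α → List β} {p : α → β → Bool} (hf : Primrec f) (hp : Primrec₂ p) :
    Primrec fun a => (f a).all (p a) := by
  have h := Primrec.list_foldr hf (const true)
    (Primrec.to₂ (Primrec.and.comp (hp.comp fst (fst.comp snd)) (snd.comp snd)))
  refine h.of_eq fun a => ?_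
  induction f a with
  | nil => rfl
  | cons hd tl ih => simp [List.all_cons, ih]

open Primrec in
theorem primrec_list_any {α β : Type*} [Primcodable α] [Primcodable β]
    {f : α → List β} {p : α → β → Bool} (hf : Primrec f) (hp : Primrec₂ p) :
    Primrec fun a => (f a).any (p a) := by
  have h := Primrec.list_foldr hf (const false)
    (Primrec.to₂ (Primrec.or.comp (hp.comp fst (fst.comp snd)) (snd.comp snd)))
  refine h.of_eq fun a => ?_
  induction f a with
  | nil => rfl
  | cons hd tl ih => simp [List.any_cons, ih]


open Primrec in
theorem primrec_ent (n : ℕ) :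
    Primrec fun x : (ℕ × ℕ × ℕ × List Bool × List Bool) × ℕ =>
      ent n x.1.1 x.1.2.1 x.1.2.2.1 x.1.2.2.2.1 x.1.2.2.2.2 x.2 := by
  have pk : Primrec fun x : (ℕ × ℕ × ℕ × List Bool × List Bool) × ℕ => x.1.1 :=
    fst.comp fst
  have ptag : Primrec fun x : (ℕ × ℕ × ℕ × List Bool × List Bool) × ℕ => x.1.2.1 :=
    fst.comp (snd.comp fst)
  have prest : Primrec fun x : (ℕ × ℕ × ℕ × List Bool × List Bool) × ℕ => x.1.2.2.1 :=
    fst.comp (snd.comp (snd.comp fst))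
  have pT1 : Primrec fun x : (ℕ × ℕ × ℕ × List Bool × List Bool) × ℕ => x.1.2.2.2.1 :=
    fst.comp (snd.comp (snd.comp (snd.comp fst)))
  have pT2 : Primrec fun x : (ℕ × ℕ × ℕ × List Bool × List Bool) × ℕ => x.1.2.2.2.2 :=
    snd.comp (snd.comp (snd.comp (snd.comp fst)))
  have pidx : Primrec fun x : (ℕ × ℕ × ℕ × List Bool × List Bool) × ℕ => x.2 := snd
  have ppe : Primrec fun x : (ℕ × ℕ × ℕ × List Bool × List Bool) × ℕ => peF x.1.1 :=
    primrec_pow.comp (const 2) pk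
  have pN : Primrec fun x : (ℕ × ℕ × ℕ × List Bool × List Bool) × ℕ => NNf n x.1.1 := by
    by_cases hn : n = 0
    · exact (primrec_pow.comp (const 2) ppe).of_eq fun x => by simp [hn, NNf, pcF, peF]
    · exact (const n).of_eq fun x => by simp [NNf, hn]
  have pE : Primrec fun x : (ℕ × ℕ × ℕ × List Bool × List Bool) × ℕ => EF x.1.1 :=
    (nat_sub.comp (primrec_pow.comp (const 2) ppe) (const 1)).of_eq fun x => by
      simp [EF, pcF, peF]
  have pt : Primrec fun x : (ℕ × ℕ × ℕ × List Bool × List Bool) × ℕ => x.2 % peF x.1.1 :=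
    nat_mod.comp pidx ppe
  have pq : Primrec fun x : (ℕ × ℕ × ℕ × List Bool × List Bool) × ℕ => x.2 / peF x.1.1 :=
    nat_div.comp pidx ppe
  have pj : Primrec fun x : (ℕ × ℕ × ℕ × List Bool × List Bool) × ℕ =>
      x.2 / peF x.1.1 % NNf n x.1.1 := nat_mod.comp pq pN
  have pi : Primrec fun x : (ℕ × ℕ × ℕ × List Bool × List Bool) × ℕ =>
      x.2 / peF x.1.1 / NNf n x.1.1 := nat_div.comp pq pN
  -- branch 0 and 1
  have b0 : Primrec fun x : (ℕ × ℕ × ℕ × List Bool × List Bool) × ℕ =>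
      bitt (x.2 % peF x.1.1) x.1.2.2.1 := primrec_bitt.comp pt prest
  have b1 := Primrec.not.comp b0
  -- branches 2, 3
  have g1 : Primrec fun x : (ℕ × ℕ × ℕ × List Bool × List Bool) × ℕ =>
      x.1.2.2.2.1.getD x.2 false := (Primrec.list_getD false).comp pT1 pidx
  have g2 : Primrec fun x : (ℕ × ℕ × ℕ × List Bool × List Bool) × ℕ =>
      x.1.2.2.2.2.getD x.2 false := (Primrec.list_getD false).comp pT2 pidx
  have b2 := Primrec.and.comp g1 g2
  have b3 := Primrec.or.comp g1 g2
  -- branches 4, 5 : loop over r < N * pe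
  have hrange45 : Primrec fun x : (ℕ × ℕ × ℕ × List Bool × List Bool) × ℕ =>
      List.range (NNf n x.1.1 * peF x.1.1) := Primrec.list_range.comp (nat_mul.comp pN ppe)
  have rpe : Primrec fun y : ((ℕ × ℕ × ℕ × List Bool × List Bool) × ℕ) × ℕ =>
      y.2 % peF y.1.1.1 := nat_mod.comp snd (ppe.comp fst)
  have rdiv : Primrec fun y : ((ℕ × ℕ × ℕ × List Bool × List Bool) × ℕ) × ℕ =>
      y.2 / peF y.1.1.1 := nat_div.comp snd (ppe.comp fst)
  have scl45 : Primrec fun y : ((ℕ × ℕ × ℕ × List Bool × List Bool) × ℕ) × ℕ =>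
      Scl n y.1.1.1 (y.1.2 / peF y.1.1.1 / NNf n y.1.1.1) (y.2 / peF y.1.1.1) :=
    (succ.comp (nat_mod.comp (nat_div.comp (pi.comp fst)
      (primrec_pow.comp (pE.comp fst) rdiv)) (pE.comp fst))).of_eq fun y => by
        simp [Scl, dig]
  have bit45 : Primrec fun y : ((ℕ × ℕ × ℕ × List Bool × List Bool) × ℕ) × ℕ =>
      bitt (Scl n y.1.1.1 (y.1.2 / peF y.1.1.1 / NNf n y.1.1.1) (y.2 / peF y.1.1.1))
        (y.2 % peF y.1.1.1) := primrec_bitt.comp scl45 rpe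
  have idx45 : Primrec fun y : ((ℕ × ℕ × ℕ × List Bool × List Bool) × ℕ) × ℕ =>
      (y.1.2 / peF y.1.1.1 / NNf n y.1.1.1 * NNf n y.1.1.1 + y.2 / peF y.1.1.1) * peF y.1.1.1
        + y.2 % peF y.1.1.1 :=
    nat_add.comp (nat_mul.comp (nat_add.comp (nat_mul.comp (pi.comp fst) (pN.comp fst)) rdiv)
      (ppe.comp fst)) rpe
  have getd45 : Primrec fun y : ((ℕ × ℕ × ℕ × List Bool × List Bool) × ℕ) × ℕ =>
      y.1.1.2.2.2.1.getD ((y.1.2 / peF y.1.1.1 / NNf n y.1.1.1 * NNf n y.1.1.1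
        + y.2 / peF y.1.1.1) * peF y.1.1.1 + y.2 % peF y.1.1.1) false :=
    (Primrec.list_getD false).comp (pT1.comp fst) idx45
  have b4 := primrec_list_all hrange45 (Primrec.to₂
    (Primrec.or.comp (Primrec.not.comp bit45) getd45))
  have b5 := primrec_list_any hrange45 (Primrec.to₂ (Primrec.and.comp bit45 getd45))
  -- branches 6, 7 : loop over t' < pe
  have hrange67 : Primrec fun x : (ℕ × ℕ × ℕ × List Bool × List Bool) × ℕ =>
      List.range (peF x.1.1) := Primrec.list_range.comp ppe
  have scl67 : Primrec fun y : ((ℕ × ℕ × ℕ × List Bool × List Bool) × ℕ) × ℕ =>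
      Scl n y.1.1.1 (y.1.2 / peF y.1.1.1 / NNf n y.1.1.1)
        (y.1.2 / peF y.1.1.1 % NNf n y.1.1.1) :=
    (succ.comp (nat_mod.comp (nat_div.comp (pi.comp fst)
      (primrec_pow.comp (pE.comp fst) (pj.comp fst))) (pE.comp fst))).of_eq fun y => by
        simp [Scl, dig]
  have bit67 : Primrec fun y : ((ℕ × ℕ × ℕ × List Bool × List Bool) × ℕ) × ℕ =>
      bitt (Scl n y.1.1.1 (y.1.2 / peF y.1.1.1 / NNf n y.1.1.1)
        (y.1.2 / peF y.1.1.1 % NNf n y.1.1.1)) y.2 := primrec_bitt.comp scl67 snd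
  have idx67 : Primrec fun y : ((ℕ × ℕ × ℕ × List Bool × List Bool) × ℕ) × ℕ =>
      y.1.2 / peF y.1.1.1 * peF y.1.1.1 + y.2 :=
    nat_add.comp (nat_mul.comp (pq.comp fst) (ppe.comp fst)) snd
  have getd67 : Primrec fun y : ((ℕ × ℕ × ℕ × List Bool × List Bool) × ℕ) × ℕ =>
      y.1.1.2.2.2.1.getD (y.1.2 / peF y.1.1.1 * peF y.1.1.1 + y.2) false :=
    (Primrec.list_getD false).comp (pT1.comp fst) idx67
  have b6 := primrec_list_all hrange67 (Primrec.to₂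
    (Primrec.or.comp (Primrec.not.comp bit67) getd67))
  have b7 := primrec_list_any hrange67 (Primrec.to₂ (Primrec.and.comp bit67 getd67))
  -- conditions
  have c0 : PrimrecPred fun x : (ℕ × ℕ × ℕ × List Bool × List Bool) × ℕ => x.1.2.1 = 0 :=
    PrimrecRel.comp Primrec.eq ptag (const 0)
  have c1 : PrimrecPred fun x : (ℕ × ℕ × ℕ × List Bool × List Bool) × ℕ => x.1.2.1 = 1 :=
    PrimrecRel.comp Primrec.eq ptag (const 1)
  have c2 : PrimrecPred fun x : (ℕ × ℕ × ℕ × List Bool × List Bool) × ℕ => x.1.2.1 = 2 :=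
    PrimrecRel.comp Primrec.eq ptag (const 2)
  have c3 : PrimrecPred fun x : (ℕ × ℕ × ℕ × List Bool × List Bool) × ℕ => x.1.2.1 = 3 :=
    PrimrecRel.comp Primrec.eq ptag (const 3)
  have c4 : PrimrecPred fun x : (ℕ × ℕ × ℕ × List Bool × List Bool) × ℕ => x.1.2.1 = 4 :=
    PrimrecRel.comp Primrec.eq ptag (const 4)
  have c5 : PrimrecPred fun x : (ℕ × ℕ × ℕ × List Bool × List Bool) × ℕ => x.1.2.1 = 5 :=
    PrimrecRel.comp Primrec.eq ptag (const 5)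
  have c6 : PrimrecPred fun x : (ℕ × ℕ × ℕ × List Bool × List Bool) × ℕ => x.1.2.1 = 6 :=
    PrimrecRel.comp Primrec.eq ptag (const 6)
  have c7 : PrimrecPred fun x : (ℕ × ℕ × ℕ × List Bool × List Bool) × ℕ => x.1.2.1 = 7 :=
    PrimrecRel.comp Primrec.eq ptag (const 7)
  have whole := Primrec.ite c0 b0 (Primrec.ite c1 b1 (Primrec.ite c2 b2 (Primrec.ite c3 b3
    (Primrec.ite c4 b4 (Primrec.ite c5 b5 (Primrec.ite c6 b6 (Primrec.ite c7 b7
      (const false))))))))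
  exact whole.of_eq fun x => by simp only [ent]


/-- The course-of-values step function for `Ffun`. -/
def gstep (n : ℕ) (k : ℕ) (prior : List (List Bool)) : Option (List Bool) :=
  some (if 2 ≤ (prior.length).unpair.1 then
    (List.range (Tlen n k)).map (ent n k (prior.length).unpair.1 (prior.length).unpair.2
      (prior.getD (if (prior.length).unpair.1 ≤ 3 then (prior.length).unpair.2.unpair.1
        else (prior.length).unpair.2) [])
      (prior.getD (prior.length).unpair.2.unpair.2 []))
  else (List.range (Tlen n k)).map (ent n k (prior.length).unpair.1 (prior.length).unpair.2 [] []))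

theorem gstep_eq (n : ℕ) (k c : ℕ) :
    gstep n k ((List.range c).map (Ffun n k)) = some (Ffun n k c) := by
  have hlen : ((List.range c).map (Ffun n k)).length = c := by simp
  unfold gstep
  rw [hlen]
  conv_rhs => rw [Ffun]
  split
  · rename_i h
    have hrest : c.unpair.2 < c := unpair_right_lt (le_trans one_le_two h)
    have hsub1 : (if c.unpair.1 ≤ 3 then c.unpair.2.unpair.1 else c.unpair.2) < c := by
      split
      · exact lt_of_le_of_lt (Nat.unpair_left_le _) hrest
      · exact hrest
    have hsub2 : c.unpair.2.unpair.2 < c := lt_of_le_of_lt (Nat.unpair_right_le _) hrest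
    rw [getD_map_range hsub1, getD_map_range hsub2]
  · rfl

open Primrec in
theorem primrec_gstep (n : ℕ) : Primrec₂ (gstep n) := by
  have zk : Primrec fun z : (ℕ × List (List Bool)) × ℕ => z.1.1 := fst.comp fst
  have zp : Primrec fun z : (ℕ × List (List Bool)) × ℕ => z.1.2 := snd.comp fst
  have zi : Primrec fun z : (ℕ × List (List Bool)) × ℕ => z.2 := snd
  have zlen : Primrec fun z : (ℕ × List (List Bool)) × ℕ => z.1.2.length :=
    list_length.comp zp
  have ztag : Primrec fun z : (ℕ × List (List Bool)) × ℕ => (z.1.2.length).unpair.1 :=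
    fst.comp (Primrec.unpair.comp zlen)
  have zrest : Primrec fun z : (ℕ × List (List Bool)) × ℕ => (z.1.2.length).unpair.2 :=
    snd.comp (Primrec.unpair.comp zlen)
  have zsub1 : Primrec fun z : (ℕ × List (List Bool)) × ℕ =>
      (if (z.1.2.length).unpair.1 ≤ 3 then (z.1.2.length).unpair.2.unpair.1
        else (z.1.2.length).unpair.2) :=
    Primrec.ite (PrimrecRel.comp nat_le ztag (const 3))
      (fst.comp (Primrec.unpair.comp zrest)) zrest
  have zT1 : Primrec fun z : (ℕ × List (List Bool)) × ℕ =>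
      z.1.2.getD (if (z.1.2.length).unpair.1 ≤ 3 then (z.1.2.length).unpair.2.unpair.1
        else (z.1.2.length).unpair.2) ([] : List Bool) :=
    (Primrec.list_getD ([] : List Bool)).comp zp zsub1
  have zT2 : Primrec fun z : (ℕ × List (List Bool)) × ℕ =>
      z.1.2.getD ((z.1.2.length).unpair.2.unpair.2) ([] : List Bool) :=
    (Primrec.list_getD ([] : List Bool)).comp zp (snd.comp (Primrec.unpair.comp zrest))
  -- Tlen as a function of the pair (k, prior)
  have ype : Primrec fun y : ℕ × List (List Bool) => peF y.1 :=
    primrec_pow.comp (const 2) fst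
  have yN : Primrec fun y : ℕ × List (List Bool) => NNf n y.1 := by
    by_cases hn : n = 0
    · exact (primrec_pow.comp (const 2) ype).of_eq fun y => by simp [hn, NNf, pcF, peF]
    · exact (const n).of_eq fun y => by simp [NNf, hn]
  have yE : Primrec fun y : ℕ × List (List Bool) => EF y.1 :=
    (nat_sub.comp (primrec_pow.comp (const 2) ype) (const 1)).of_eq fun y => by
      simp [EF, pcF, peF]
  have yrange : Primrec fun y : ℕ × List (List Bool) => List.range (Tlen n y.1) :=
    Primrec.list_range.comp ((nat_mul.comp (primrec_pow.comp yE yN)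
      (nat_mul.comp yN ype)).of_eq fun y => by simp [Tlen])
  -- the two branches
  have buildThen : Primrec fun z : (ℕ × List (List Bool)) × ℕ =>
      ((z.1.1, (z.1.2.length).unpair.1, (z.1.2.length).unpair.2,
        z.1.2.getD (if (z.1.2.length).unpair.1 ≤ 3 then (z.1.2.length).unpair.2.unpair.1
          else (z.1.2.length).unpair.2) ([] : List Bool),
        z.1.2.getD ((z.1.2.length).unpair.2.unpair.2) ([] : List Bool)), z.2) :=
    Primrec.pair (Primrec.pair zk (Primrec.pair ztag (Primrec.pair zrest
      (Primrec.pair zT1 zT2)))) zi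
  have buildElse : Primrec fun z : (ℕ × List (List Bool)) × ℕ =>
      ((z.1.1, (z.1.2.length).unpair.1, (z.1.2.length).unpair.2,
        ([] : List Bool), ([] : List Bool)), z.2) :=
    Primrec.pair (Primrec.pair zk (Primrec.pair ztag (Primrec.pair zrest
      (Primrec.pair (const ([] : List Bool)) (const ([] : List Bool)))))) zi
  have thenB : Primrec fun y : ℕ × List (List Bool) =>
      (List.range (Tlen n y.1)).map (ent n y.1 (y.2.length).unpair.1 (y.2.length).unpair.2
        (y.2.getD (if (y.2.length).unpair.1 ≤ 3 then (y.2.length).unpair.2.unpair.1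
          else (y.2.length).unpair.2) [])
        (y.2.getD (y.2.length).unpair.2.unpair.2 [])) :=
    Primrec.list_map yrange (Primrec.to₂ ((primrec_ent n).comp buildThen))
  have elseB : Primrec fun y : ℕ × List (List Bool) =>
      (List.range (Tlen n y.1)).map (ent n y.1 (y.2.length).unpair.1 (y.2.length).unpair.2
        [] []) :=
    Primrec.list_map yrange (Primrec.to₂ ((primrec_ent n).comp buildElse))
  have cond : PrimrecPred fun y : ℕ × List (List Bool) => 2 ≤ (y.2.length).unpair.1 :=
    PrimrecRel.comp nat_le (const 2) (fst.comp (Primrec.unpair.comp (list_length.comp snd)))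
  have whole : Primrec fun y : ℕ × List (List Bool) => gstep n y.1 y.2 :=
    (option_some.comp (Primrec.ite cond thenB elseB)).of_eq fun y => rfl
  exact Primrec.to₂ whole

theorem primrec_Ffun (n : ℕ) : Primrec₂ (Ffun n) :=
  Primrec.nat_strong_rec _ (primrec_gstep n) (fun k c => gstep_eq n k c)

open Primrec in
theorem primrec_chk (n : ℕ) : Primrec (chk n) := by
  have yk : Primrec fun y : ℕ × ℕ => y.1 + 1 := succ.comp fst
  have ype : Primrec fun y : ℕ × ℕ => peF (y.1 + 1) := primrec_pow.comp (const 2) yk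
  have yN : Primrec fun y : ℕ × ℕ => NNf n (y.1 + 1) := by
    by_cases hn : n = 0
    · exact (primrec_pow.comp (const 2) ype).of_eq fun y => by simp [hn, NNf, pcF, peF]
    · exact (const n).of_eq fun y => by simp [NNf, hn]
  have yE : Primrec fun y : ℕ × ℕ => EF (y.1 + 1) :=
    (nat_sub.comp (primrec_pow.comp (const 2) ype) (const 1)).of_eq fun y => by
      simp [EF, pcF, peF]
  have yq : Primrec fun y : ℕ × ℕ => y.2 / peF (y.1 + 1) := nat_div.comp snd ype
  have yi : Primrec fun y : ℕ × ℕ => y.2 / peF (y.1 + 1) / NNf n (y.1 + 1) :=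
    nat_div.comp yq yN
  have yj : Primrec fun y : ℕ × ℕ => y.2 / peF (y.1 + 1) % NNf n (y.1 + 1) :=
    nat_mod.comp yq yN
  have yscl : Primrec fun y : ℕ × ℕ =>
      Scl n (y.1 + 1) (y.2 / peF (y.1 + 1) / NNf n (y.1 + 1))
        (y.2 / peF (y.1 + 1) % NNf n (y.1 + 1)) :=
    (succ.comp (nat_mod.comp (nat_div.comp yi (primrec_pow.comp yE yj)) yE)).of_eq fun y =>
      by simp [Scl, dig]
  have ybit : Primrec fun y : ℕ × ℕ =>
      bitt (Scl n (y.1 + 1) (y.2 / peF (y.1 + 1) / NNf n (y.1 + 1))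
        (y.2 / peF (y.1 + 1) % NNf n (y.1 + 1))) (y.2 % peF (y.1 + 1)) :=
    primrec_bitt.comp yscl (nat_mod.comp snd ype)
  have yF : Primrec fun y : ℕ × ℕ => Ffun n (y.1 + 1) y.1 :=
    (primrec_Ffun n).comp yk fst
  have ygetd : Primrec fun y : ℕ × ℕ => (Ffun n (y.1 + 1) y.1).getD y.2 false :=
    (Primrec.list_getD false).comp yF snd
  have inner : Primrec₂ fun (c idx : ℕ) =>
      (!(bitt (Scl n (c + 1) (idx / peF (c + 1) / NNf n (c + 1))
        (idx / peF (c + 1) % NNf n (c + 1))) (idx % peF (c + 1)))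
      || (Ffun n (c + 1) c).getD idx false) :=
    Primrec.to₂ (Primrec.or.comp (Primrec.not.comp ybit) ygetd)
  have hrange : Primrec fun c : ℕ => List.range (Tlen n (c + 1)) := by
    have cpe : Primrec fun c : ℕ => peF (c + 1) := primrec_pow.comp (const 2) succ
    have cN : Primrec fun c : ℕ => NNf n (c + 1) := by
      by_cases hn : n = 0
      · exact (primrec_pow.comp (const 2) cpe).of_eq fun c => by simp [hn, NNf, pcF, peF]
      · exact (const n).of_eq fun c => by simp [NNf, hn]
    have cE : Primrec fun c : ℕ => EF (c + 1) :=
      (nat_sub.comp (primrec_pow.comp (const 2) cpe) (const 1)).of_eq fun c => by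
        simp [EF, pcF, peF]
    exact Primrec.list_range.comp ((nat_mul.comp (primrec_pow.comp cE cN)
      (nat_mul.comp cN cpe)).of_eq fun c => by simp [Tlen])
  exact (primrec_list_all hrange inner).of_eq fun c => by simp only [chk]

theorem computable_chk (n : ℕ) : Computable (chk n) := (primrec_chk n).to_comp

theorem single_agent_decidability' (n : ℕ) :
    Function.Injective encFml ∧
    ∃ f : ℕ → Bool, Computable f ∧ ∀ φ : Fml 1, (f (encFml φ) = true ↔ Valid n 1 φ) :=
  ⟨encFml_injective, chk n, computable_chk n,
    fun φ => ⟨chk_implies_valid n φ, valid_implies_chk n φ⟩⟩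


/-- Decidability of single-agent STIT logics: for each `n`, there is a
computable function deciding, for each formula `φ ∈ L^1` (presented via the injective
encoding `encFml`), whether `φ` is valid on all `Ldm_n^1`-models. -/
theorem single_agent_decidability (n : ℕ) :
    Function.Injective encFml ∧
    ∃ f : ℕ → Bool, Computable f ∧ ∀ φ : Fml 1, (f (encFml φ) = true ↔ Valid n 1 φ) :=
  single_agent_decidability' n

end Stit
end

section
/- Forestlike derivations suffice in the single-agent refined calculi: for each n ∈ ℕ, if a labelled formula w:φ (φ ∈ L^1) is derivable in Ldm_n^1 L, then it has a derivation in Ldm_n^1 L in which every labelled sequent occurring in the derivation is forestlike. -/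
namespace Stit

/-- The edge relation of the graph of a single-agent labelled sequent:
`(w,u)` is an edge iff `R_1 wu` occurs among the relational atoms. -/
def Edge (R : RAtoms 1) (x y : ℕ) : Prop := (((0 : Fin 1), x, y) : RAtom 1) ∈ R

/-- A single-agent sequent is forestlike iff its graph is a disjoint union of
(rooted, directed) trees: every vertex has at most one parent and there are no
directed cycles, so that from the root of each component there is exactly one
directed path to every vertex of that component. -/
def Forestlike (R : RAtoms 1) : Prop :=
  (∀ x x' y, Edge R x y → Edge R x' y → x = x') ∧
  ∀ x, ¬ Relation.TransGen (Edge R) x x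

/-- The set of labels occurring in the labelled sequent `R, Γ`. -/
def SeqLabels {m : ℕ} (R : RAtoms m) (Γ : LFmls m) : Set ℕ :=
  {x | (∃ a ∈ R, a.2.1 = x ∨ a.2.2 = x) ∨ ∃ e ∈ Γ, e.1 = x}

/-- The calculus `Ldm_n^1 L` restricted to forestlike sequents: the same rules as
`Ldm_n^1 L` (id, ∧, ∨, □, ◇, [1], Pr_1 and, for `n > 0`, APC_n^1; no IOA), where the
conclusion of every rule application is required to be forestlike (hence every sequent
occurring in a derivation is forestlike). -/
inductive FSeq (n : ℕ) : RAtoms 1 → LFmls 1 → Prop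
  | id {R Γ} (w p : ℕ) (hf : Forestlike R) :
      FSeq n R ((w, Fml.pos p) ::ₘ (w, Fml.neg p) ::ₘ Γ)
  | andR {R Γ} {w : ℕ} {φ ψ : Fml 1} (hf : Forestlike R) :
      FSeq n R ((w, Fml.and φ ψ) ::ₘ (w, φ) ::ₘ Γ) →
      FSeq n R ((w, Fml.and φ ψ) ::ₘ (w, ψ) ::ₘ Γ) →
      FSeq n R ((w, Fml.and φ ψ) ::ₘ Γ)
  | orR {R Γ} {w : ℕ} {φ ψ : Fml 1} (hf : Forestlike R) :
      FSeq n R ((w, Fml.or φ ψ) ::ₘ (w, φ) ::ₘ (w, ψ) ::ₘ Γ) →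
      FSeq n R ((w, Fml.or φ ψ) ::ₘ Γ)
  | boxR {R Γ} {w v : ℕ} {φ : Fml 1} (hf : Forestlike R)
      (hv : freshIn v R ((w, Fml.box φ) ::ₘ Γ)) :
      FSeq n R ((w, Fml.box φ) ::ₘ (v, φ) ::ₘ Γ) →
      FSeq n R ((w, Fml.box φ) ::ₘ Γ)
  | diaR {R Γ} {w u : ℕ} {φ : Fml 1} (hf : Forestlike R) :
      FSeq n R ((w, Fml.dia φ) ::ₘ (u, φ) ::ₘ Γ) →
      FSeq n R ((w, Fml.dia φ) ::ₘ Γ)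
  | agRKeep {R Γ} {w v : ℕ} {φ : Fml 1} (hf : Forestlike R)
      (hv : freshIn v R ((w, Fml.ag 0 φ) ::ₘ Γ)) :
      FSeq n ((((0 : Fin 1), w, v) : RAtom 1) ::ₘ R)
        ((w, Fml.ag 0 φ) ::ₘ (v, φ) ::ₘ Γ) →
      FSeq n R ((w, Fml.ag 0 φ) ::ₘ Γ)
  | prR {R Γ} {w u : ℕ} {φ : Fml 1} (hf : Forestlike R)
      (hreach : Reach R 0 w u) :
      FSeq n R ((w, Fml.dag 0 φ) ::ₘ (u, φ) ::ₘ Γ) →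
      FSeq n R ((w, Fml.dag 0 φ) ::ₘ Γ)
  | apcR {R Γ} (hf : Forestlike R) (hn : 0 < n) (i : Fin 1) (w : Fin (n+1) → ℕ) :
      (∀ k j : Fin (n+1), k < j → FSeq n (((i, w k, w j) : RAtom 1) ::ₘ R) Γ) →
      FSeq n R Γ

/-! ### Auxiliary development for the forestlike-derivations theorem -/

lemma reach_trans {R : RAtoms 1} {i : Fin 1} {x y z : ℕ}
    (h1 : Reach R i x y) (h2 : Reach R i y z) : Reach R i x z := by
  induction h2 with
  | refl => exact h1
  | fwd h hm ih => exact .fwd ih hm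
  | bwd h hm ih => exact .bwd ih hm

lemma reach_symm {R : RAtoms 1} {i : Fin 1} {x y : ℕ}
    (h : Reach R i x y) : Reach R i y x := by
  induction h with
  | refl => exact .refl _
  | fwd h hm ih => exact reach_trans (.bwd (.refl _) hm) ih
  | bwd h hm ih => exact reach_trans (.fwd (.refl _) hm) ih

lemma reach_mono {R R' : RAtoms 1}
    (hA : ∀ a : RAtom 1, a ∈ R → Reach R' 0 a.2.1 a.2.2)
    {i : Fin 1} {x y : ℕ} (h : Reach R i x y) : Reach R' 0 x y := by
  induction h with
  | refl => exact .refl _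
  | fwd h hm ih => exact reach_trans ih (hA _ hm)
  | bwd h hm ih => exact reach_trans ih (reach_symm (hA _ hm))

lemma reach_cons {R : RAtoms 1} (a : RAtom 1) {i : Fin 1} {x y : ℕ}
    (h : Reach R i x y) : Reach (a ::ₘ R) i x y := by
  induction h with
  | refl => exact .refl _
  | fwd h hm ih => exact .fwd ih (Multiset.mem_cons_of_mem hm)
  | bwd h hm ih => exact .bwd ih (Multiset.mem_cons_of_mem hm)

/-- The labels occurring among the relational atoms. -/
def RL (R : RAtoms 1) : Set ℕ := {z | ∃ a ∈ R, a.2.1 = z ∨ a.2.2 = z}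

lemma reach_rl {R : RAtoms 1} {i : Fin 1} {x y : ℕ} (h : Reach R i x y) :
    y = x ∨ y ∈ RL R := by
  induction h with
  | refl => exact Or.inl rfl
  | fwd h hm ih => exact Or.inr ⟨_, hm, Or.inr rfl⟩
  | bwd h hm ih => exact Or.inr ⟨_, hm, Or.inl rfl⟩

lemma fresh_reach {R : RAtoms 1} {v : ℕ}
    (hfr : ∀ a ∈ R, a.2.1 ≠ v ∧ a.2.2 ≠ v) {i : Fin 1} {z : ℕ}
    (h : Reach R i v z) : z = v := by
  induction h with
  | refl => rfl
  | fwd h hm ih => cases ih; exact absurd rfl (hfr _ hm).1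
  | bwd h hm ih => cases ih; exact absurd rfl (hfr _ hm).2

lemma rtg_reach {R : RAtoms 1} {x y : ℕ}
    (h : Relation.ReflTransGen (Edge R) x y) : Reach R 0 x y := by
  induction h with
  | refl => exact .refl _
  | tail h1 h2 ih => exact .fwd ih h2

lemma edge_cons {R : RAtoms 1} {a b x y : ℕ}
    (h : Edge (((0 : Fin 1), a, b) ::ₘ R) x y) : (x = a ∧ y = b) ∨ Edge R x y := by
  rcases Multiset.mem_cons.1 h with h | h
  · simp only [Prod.mk.injEq] at h
    exact Or.inl ⟨h.2.1, h.2.2⟩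
  · exact Or.inr h

lemma tg_decomp {R : RAtoms 1} {a b x y : ℕ}
    (h : Relation.TransGen (Edge (((0 : Fin 1), a, b) ::ₘ R)) x y) :
    Relation.TransGen (Edge R) x y ∨
      (Relation.ReflTransGen (Edge R) x a ∧ Relation.ReflTransGen (Edge R) b y) := by
  induction h with
  | single h =>
      rcases edge_cons h with ⟨hx, hy⟩ | h
      · subst hx; subst hy; exact Or.inr ⟨.refl, .refl⟩
      · exact Or.inl (.single h)
  | tail h1 h2 ih =>
      rcases edge_cons h2 with ⟨hu, hy⟩ | h2
      · subst hu; subst hy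
        rcases ih with ih | ⟨ih1, _⟩
        · exact Or.inr ⟨ih.to_reflTransGen, .refl⟩
        · exact Or.inr ⟨ih1, .refl⟩
      · rcases ih with ih | ⟨ih1, ih2⟩
        · exact Or.inl (ih.tail h2)
        · exact Or.inr ⟨ih1, ih2.tail h2⟩

lemma forest_cons {R : RAtoms 1} {a b : ℕ} (hf : Forestlike R)
    (hroot : ∀ y, ¬ Edge R y b) (hnr : ¬ Reach R 0 b a) :
    Forestlike (((0 : Fin 1), a, b) ::ₘ R) := by
  constructor
  · intro x x' y hx hx'
    rcases edge_cons hx with ⟨h1, h2⟩ | hx0 <;>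
      rcases edge_cons hx' with ⟨h1', h2'⟩ | hx'0
    · exact h1.trans h1'.symm
    · subst h2; exact absurd hx'0 (hroot x')
    · subst h2'; exact absurd hx0 (hroot x)
    · exact hf.1 x x' y hx0 hx'0
  · intro x hcyc
    rcases tg_decomp hcyc with h | ⟨h1, h2⟩
    · exact hf.2 x h
    · exact hnr (rtg_reach (h2.trans h1))

lemma fresh_forest_cons {R : RAtoms 1} {w v : ℕ} (hf : Forestlike R)
    (hfr : ∀ a ∈ R, a.2.1 ≠ v ∧ a.2.2 ≠ v) (hwv : w ≠ v) :
    Forestlike (((0 : Fin 1), w, v) ::ₘ R) :=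
  forest_cons hf (fun y hE => (hfr _ hE).2 rfl)
    (fun hr => hwv (fresh_reach hfr hr))

noncomputable def chain (R : RAtoms 1) (x : ℕ)
    (h : ∀ z, Reach R 0 x z → ∃ y, Edge R y z) : ℕ → {z : ℕ // Reach R 0 x z}
  | 0 => ⟨x, .refl x⟩
  | k+1 =>
      let p := chain R x h k
      ⟨(h p.1 p.2).choose, .bwd p.2 (h p.1 p.2).choose_spec⟩

lemma chain_step (R : RAtoms 1) (x : ℕ)
    (h : ∀ z, Reach R 0 x z → ∃ y, Edge R y z) (k : ℕ) :
    Edge R (chain R x h (k+1)).1 (chain R x h k).1 :=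
  (h (chain R x h k).1 (chain R x h k).2).choose_spec

lemma chain_tg (R : RAtoms 1) (x : ℕ)
    (h : ∀ z, Reach R 0 x z → ∃ y, Edge R y z) {k l : ℕ} (hkl : k < l) :
    Relation.TransGen (Edge R) (chain R x h l).1 (chain R x h k).1 := by
  induction hkl with
  | refl => exact .single (chain_step R x h k)
  | step h' ih =>
      rename_i m
      exact Relation.TransGen.head (chain_step R x h m) ih

lemma exists_root {R : RAtoms 1} (hf : Forestlike R) (x : ℕ) :
    ∃ z, Reach R 0 x z ∧ ∀ y, ¬ Edge R y z := by
  by_contra hc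
  push_neg at hc
  have h : ∀ z, Reach R 0 x z → ∃ y, Edge R y z := fun z hz => (hc z hz)
  have hmem : ∀ k : ℕ, (chain R x h (k+1)).1 ∈
      R.toFinset.image (fun a : RAtom 1 => a.2.1) := by
    intro k
    exact Finset.mem_image.2 ⟨_, Multiset.mem_toFinset.2 (chain_step R x h k), rfl⟩
  obtain ⟨k, l, hkl, he⟩ :=
    Finite.exists_ne_map_eq_of_infinite
      (fun k : ℕ => (⟨(chain R x h (k+1)).1, hmem k⟩ :
        (R.toFinset.image (fun a : RAtom 1 => a.2.1))))
  have he' : (chain R x h (k+1)).1 = (chain R x h (l+1)).1 := Subtype.mk_eq_mk.1 he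
  rcases hkl.lt_or_gt with h' | h'
  · have ht := chain_tg R x h (Nat.succ_lt_succ h')
    rw [he'] at ht
    exact hf.2 _ ht
  · have ht := chain_tg R x h (Nat.succ_lt_succ h')
    rw [← he'] at ht
    exact hf.2 _ ht

lemma sl_mono {R R' : RAtoms 1} {Γ Γ' : LFmls 1}
    (hR : ∀ a ∈ R, a ∈ R') (hΓ : ∀ e ∈ Γ, e ∈ Γ') :
    ∀ z ∈ SeqLabels R Γ, z ∈ SeqLabels R' Γ' := by
  intro z hz
  simp only [SeqLabels, Set.mem_setOf_eq] at hz ⊢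
  rcases hz with ⟨a, ha, h'⟩ | ⟨e, he, h'⟩
  · exact Or.inl ⟨a, hR a ha, h'⟩
  · exact Or.inr ⟨e, hΓ e he, h'⟩

lemma fresh_transfer {v : ℕ} {R R' : RAtoms 1} {Γ : LFmls 1}
    (hv : freshIn v R Γ) (hl : ∀ z ∈ RL R', z ∈ SeqLabels R Γ) :
    freshIn v R' Γ := by
  refine ⟨?_, hv.2⟩
  intro a ha
  have key : ∀ (hh : v ∈ RL R'), False := by
    intro hh
    have := hl v hh
    simp only [SeqLabels, Set.mem_setOf_eq] at this
    rcases this with ⟨b, hb, hb'⟩ | ⟨e, he, he'⟩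
    · rcases hb' with h' | h'
      · exact (hv.1 b hb).1 h'
      · exact (hv.1 b hb).2 h'
    · exact hv.2 e he he'
  exact ⟨fun h' => key ⟨a, ha, Or.inl h'⟩, fun h' => key ⟨a, ha, Or.inr h'⟩⟩

theorem toForest {n : ℕ} {h : ℕ} {R : RAtoms 1} {Γ : LFmls 1}
    (hd : SeqH LdmL1flags n 1 h R Γ) :
    ∀ R' : RAtoms 1, Forestlike R' →
      (∀ a : RAtom 1, a ∈ R → Reach R' 0 a.2.1 a.2.2) →
      (∀ z ∈ RL R', z ∈ SeqLabels R Γ) →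
      FSeq n R' Γ := by
  induction hd with
  | id w p =>
      intro R' hf _ _
      exact FSeq.id w p hf
  | andR h1 h2 ih1 ih2 =>
      intro R' hf hA hl
      refine FSeq.andR hf
        (ih1 R' hf hA ?_) (ih2 R' hf hA ?_) <;>
      · intro z hz
        refine sl_mono (fun a ha => ha) ?_ z (hl z hz)
        intro e he
        simp only [Multiset.mem_cons] at he ⊢
        tauto
  | orR h1 ih =>
      intro R' hf hA hl
      refine FSeq.orR hf (ih R' hf hA ?_)
      intro z hz
      refine sl_mono (fun a ha => ha) ?_ z (hl z hz)
      intro e he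
      simp only [Multiset.mem_cons] at he ⊢
      tauto
  | boxR hv hprem ih =>
      intro R' hf hA hl
      refine FSeq.boxR hf (fresh_transfer hv hl) (ih R' hf hA ?_)
      intro z hz
      refine sl_mono (fun a ha => ha) ?_ z (hl z hz)
      intro e he
      simp only [Multiset.mem_cons] at he ⊢
      tauto
  | diaR hprem ih =>
      intro R' hf hA hl
      refine FSeq.diaR hf (ih R' hf hA ?_)
      intro z hz
      refine sl_mono (fun a ha => ha) ?_ z (hl z hz)
      intro e he
      simp only [Multiset.mem_cons] at he ⊢
      tauto
  | agR hfl hv hprem ih => exact absurd hfl (by decide)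
  | agRKeep hfl hv hprem ih =>
      rename_i h R Γ w v i φ
      intro R' hf hA hl
      have hiz : i = 0 := Subsingleton.elim i 0
      subst hiz
      have hv' : freshIn v R' ((w, Fml.ag 0 φ) ::ₘ Γ) := fresh_transfer hv hl
      have hwv : w ≠ v := hv'.2 (w, Fml.ag 0 φ) (Multiset.mem_cons_self _ _)
      have hf2 : Forestlike (((0 : Fin 1), w, v) ::ₘ R') :=
        fresh_forest_cons hf (fun a ha => hv'.1 a ha) hwv
      refine FSeq.agRKeep hf hv' (ih (((0 : Fin 1), w, v) ::ₘ R') hf2 ?_ ?_)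
      · intro a ha
        rcases Multiset.mem_cons.1 ha with rfl | ha
        · exact Reach.fwd (.refl _) (Multiset.mem_cons_self _ _)
        · exact reach_cons _ (hA a ha)
      · intro z hz
        simp only [RL, Set.mem_setOf_eq] at hz
        obtain ⟨a, ha, hza⟩ := hz
        rcases Multiset.mem_cons.1 ha with rfl | ha
        · simp only [SeqLabels, Set.mem_setOf_eq]
          exact Or.inl ⟨((0 : Fin 1), w, v), Multiset.mem_cons_self _ _, hza⟩
        · refine sl_mono (fun b hb => Multiset.mem_cons_of_mem hb) ?_ z
            (hl z ⟨a, ha, hza⟩)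
          intro e he
          simp only [Multiset.mem_cons] at he ⊢
          tauto
  | dagR hfl hprem ih => exact absurd hfl (by decide)
  | reflR hfl hprem ih => exact absurd hfl (by decide)
  | euclR hfl hprem ih => exact absurd hfl (by decide)
  | ioaR hfl u v hv hprem ih => exact absurd hfl (by decide)
  | apcR hn i w hprem ih =>
      intro R' hf hA hl
      by_cases hc : ∃ k j : Fin (n+1), k < j ∧ Reach R' 0 (w k) (w j)
      · obtain ⟨k, j, hkj, hr⟩ := hc
        refine ih k j hkj R' hf ?_ ?_
        · intro a ha
          rcases Multiset.mem_cons.1 ha with rfl | ha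
          · exact hr
          · exact hA a ha
        · intro z hz
          exact sl_mono (fun b hb => Multiset.mem_cons_of_mem hb)
            (fun e he => he) z (hl z hz)
      · push_neg at hc
        choose ρ hρ1 hρ2 using fun k : Fin (n+1) => exists_root hf (w k)
        refine FSeq.apcR hf hn 0 ρ ?_
        intro k j hkj
        have hne : ¬ Reach R' 0 (ρ j) (ρ k) := by
          intro hr
          exact hc k j hkj
            (reach_trans (hρ1 k) (reach_trans (reach_symm hr) (reach_symm (hρ1 j))))
        have hfor : Forestlike (((0 : Fin 1), ρ k, ρ j) ::ₘ R') :=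
          forest_cons hf (hρ2 j) hne
        refine ih k j hkj (((0 : Fin 1), ρ k, ρ j) ::ₘ R') hfor ?_ ?_
        · intro a ha
          rcases Multiset.mem_cons.1 ha with rfl | ha
          · have h1 : Reach (((0 : Fin 1), ρ k, ρ j) ::ₘ R') 0 (w k) (ρ k) :=
              reach_cons _ (hρ1 k)
            have h2 : Reach (((0 : Fin 1), ρ k, ρ j) ::ₘ R') 0 (w k) (ρ j) :=
              .fwd h1 (Multiset.mem_cons_self _ _)
            exact reach_trans h2 (reach_cons _ (reach_symm (hρ1 j)))
          · exact reach_cons _ (hA a ha)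
        · intro z hz
          simp only [RL, Set.mem_setOf_eq] at hz
          obtain ⟨a, ha, hza⟩ := hz
          rcases Multiset.mem_cons.1 ha with rfl | ha
          · simp only [SeqLabels, Set.mem_setOf_eq]
            rcases hza with h' | h'
            · rcases reach_rl (hρ1 k) with he | hm
              · exact Or.inl ⟨(i, w k, w j), Multiset.mem_cons_self _ _,
                  Or.inl (by rw [← h', he])⟩
              · have := hl z (by rw [← h']; exact hm)
                simp only [SeqLabels, Set.mem_setOf_eq] at this
                rcases this with ⟨b, hb, hb'⟩ | hh
                · exact Or.inl ⟨b, Multiset.mem_cons_of_mem hb, hb'⟩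
                · exact Or.inr hh
            · rcases reach_rl (hρ1 j) with he | hm
              · exact Or.inl ⟨(i, w k, w j), Multiset.mem_cons_self _ _,
                  Or.inr (by rw [← h', he])⟩
              · have := hl z (by rw [← h']; exact hm)
                simp only [SeqLabels, Set.mem_setOf_eq] at this
                rcases this with ⟨b, hb, hb'⟩ | hh
                · exact Or.inl ⟨b, Multiset.mem_cons_of_mem hb, hb'⟩
                · exact Or.inr hh
          · exact sl_mono (fun b hb => Multiset.mem_cons_of_mem hb)
              (fun e he => he) z (hl z ⟨a, ha, hza⟩)
  | prR hfl hreach hprem ih =>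
      rename_i h R Γ w u i φ
      intro R' hf hA hl
      have hiz : i = 0 := Subsingleton.elim i 0
      subst hiz
      refine FSeq.prR hf (reach_mono hA hreach) (ih R' hf hA ?_)
      intro z hz
      refine sl_mono (fun a ha => ha) ?_ z (hl z hz)
      intro e he
      simp only [Multiset.mem_cons] at he ⊢
      tauto

/-- Forestlike derivations suffice in `Ldm_n^1 L`: if `w:φ` is derivable
in `Ldm_n^1 L`, then it has a derivation in which every labelled sequent is forestlike. -/
theorem forestlike_derivations_suffice (n : ℕ) (w : ℕ) (φ : Fml 1)
    (hd : Seq LdmL1flags n 1 0 {(w, φ)}) :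
    FSeq n 0 {(w, φ)} := by
  obtain ⟨h, hd⟩ := hd
  refine toForest hd 0 ⟨?_, ?_⟩ ?_ ?_
  · intro x x' y hx _
    exact absurd hx (Multiset.notMem_zero _)
  · intro x hx
    cases hx with
    | single h' => exact absurd h' (Multiset.notMem_zero _)
    | tail _ h' => exact absurd h' (Multiset.notMem_zero _)
  · intro a ha
    exact absurd ha (Multiset.notMem_zero _)
  · intro z hz
    obtain ⟨a, ha, -⟩ := hz
    exact absurd ha (Multiset.notMem_zero _)

end Stit
end
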